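/- arXiv:1002.0312 — 7 statements merged into one kernel-verified Lean document; each statement's English description precedes it below -/
import Mathlib

section
/- Let A be a nonzero normed algebra over ℂ (not necessarily associative, unital, or complete). If A contains no nonzero left topological linear zero divisor and contains at least one left linearly invertible element, then A is isomorphic as a ℂ-algebra to ℂ. -/
/-!
STATEMENT 0: Let `A` be a nonzero normed algebra over `ℂ` (not necessarily associative,
unital, or complete), i.e. a complex normed space equipped with a bilinear product `m`
satisfying `‖m x y‖ ≤ ‖x‖ * ‖y‖`.  If `A` contains no nonzero left topological linear
zero divisor and contains at least one left linearly invertible element, then `A` is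
isomorphic as a `ℂ`-algebra to `ℂ`.
-/

open Filter Topology

open UniformSpace in

set_option maxHeartbeats 1000000 in
theorem normed_complex_algebra_no_left_tlzd_with_left_inv_iso_complex
    {A : Type*} [NormedAddCommGroup A] [NormedSpace ℂ A] [Nontrivial A]
    (m : A →ₗ[ℂ] A →ₗ[ℂ] A)
    (hnorm : ∀ x y : A, ‖m x y‖ ≤ ‖x‖ * ‖y‖)
    (hnotlzd : ∀ a : A,
      (∃ x : ℕ → A, (∀ n, ‖x n‖ = 1) ∧ Tendsto (fun n => m a (x n)) atTop (𝓝 0)) → a = 0)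
    (hinv : ∃ a : A, Function.Bijective (fun x => m a x)) :
    ∃ e : A ≃ₗ[ℂ] ℂ, ∀ x y : A, e (m x y) = e x * e y := by
  classical
  obtain ⟨a, ha⟩ := hinv
  have ha0 : a ≠ 0 := by
    rintro rfl
    obtain ⟨x, hx⟩ := exists_ne (0 : A)
    exact hx (ha.injective (by simp))
  -- lower bounds on A
  have hlowA : ∀ b : A, b ≠ 0 → ∃ c > 0, ∀ x : A, c * ‖x‖ ≤ ‖m b x‖ := by
    intro b hb
    by_contra hcon
    push_neg at hcon
    have hseq : ∀ n : ℕ, ∃ u : A, ‖u‖ = 1 ∧ ‖m b u‖ < 1 / (n + 1) := by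
      intro n
      obtain ⟨x, hx⟩ := hcon (1 / (n + 1)) (by positivity)
      have hx0 : x ≠ 0 := by
        rintro rfl; simp at hx
      refine ⟨(‖x‖ : ℂ)⁻¹ • x, ?_, ?_⟩
      · rw [norm_smul, norm_inv, Complex.norm_real, norm_norm,
          inv_mul_cancel₀ (norm_ne_zero_iff.mpr hx0)]
      · rw [map_smul, norm_smul, norm_inv, Complex.norm_real, norm_norm]
        calc ‖x‖⁻¹ * ‖m b x‖ < ‖x‖⁻¹ * (1 / (n + 1) * ‖x‖) := by
              apply mul_lt_mul_of_pos_left hx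
              exact inv_pos.mpr (norm_pos_iff.mpr hx0)
          _ = 1 / (n + 1) := by
              field_simp
    choose u hu1 hu2 using hseq
    have : Tendsto (fun n => m b (u n)) atTop (𝓝 0) := by
      rw [tendsto_zero_iff_norm_tendsto_zero]
      apply squeeze_zero (fun n => norm_nonneg _) (fun n => (hu2 n).le)
      exact tendsto_one_div_add_atTop_nhds_zero_nat
    exact hb (hnotlzd b ⟨u, hu1, this⟩)
  set B := UniformSpace.Completion A with hB
  let i : A →L[ℂ] B := Completion.toComplL
  have hi : ∀ x : A, i x = (x : B) := fun x => rfl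
  have hinorm : ∀ x : A, ‖i x‖ = ‖x‖ := fun x => Completion.norm_coe x
  have dense : DenseRange (⇑i) := Completion.denseRange_coe
  have ui : IsUniformInducing (⇑i) := Completion.isUniformInducing_coe A
  -- the multiplication operators, extended to the completion
  let Lhat : A → (B →L[ℂ] B) := fun b =>
    ((i.comp ((m b).mkContinuous ‖b‖ (hnorm b))).extend i)
  have hLi : ∀ (b : A) (x : A), Lhat b (i x) = i (m b x) := by
    intro b x
    exact ContinuousLinearMap.extend_eq _ dense ui x
  have hext : ∀ f g : B →L[ℂ] B, (∀ x : A, f (i x) = g (i x)) → f = g := by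
    intro f g h
    exact ContinuousLinearMap.coeFn_injective
      (dense.equalizer f.continuous g.continuous (funext h))
  have hadd : ∀ u v : A, Lhat (u + v) = Lhat u + Lhat v := by
    intro u v
    refine hext _ _ fun x => ?_
    simp [hLi, map_add, LinearMap.add_apply]
  have hsmul : ∀ (s : ℂ) (u : A), Lhat (s • u) = s • Lhat u := by
    intro s u
    refine hext _ _ fun x => ?_
    simp [hLi, map_smul, LinearMap.smul_apply]
  let LhatL : A →ₗ[ℂ] (B →L[ℂ] B) :=
    { toFun := Lhat, map_add' := hadd, map_smul' := hsmul }
  -- lower bounds extend to the completion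
  have hlow : ∀ b : A, b ≠ 0 → ∃ c > 0, ∀ y : B, c * ‖y‖ ≤ ‖Lhat b y‖ := by
    intro b hb
    obtain ⟨c, hc, hcb⟩ := hlowA b hb
    refine ⟨c, hc, fun y => ?_⟩
    refine DenseRange.induction_on dense y ?_ fun x => ?_
    · exact isClosed_le (continuous_const.mul continuous_norm)
        ((Lhat b).continuous.norm)
    · rw [hLi, hinorm, hinorm]
      exact hcb x
  -- nontriviality of the completion and of its operator ring
  have hBnt : Nontrivial B := by
    obtain ⟨x, hx⟩ := exists_ne (0 : A)
    refine ⟨i x, 0, fun h => hx (norm_eq_zero.mp ?_)⟩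
    rw [← hinorm x, h, norm_zero]
  have hRnt : Nontrivial (B →L[ℂ] B) := by
    obtain ⟨y, z, hyz⟩ := hBnt
    refine ⟨1, 0, fun h => hyz ?_⟩
    have h1 : (1 : B →L[ℂ] B) y = (0 : B →L[ℂ] B) y := by rw [h]
    have h2 : (1 : B →L[ℂ] B) z = (0 : B →L[ℂ] B) z := by rw [h]
    simp only [ContinuousLinearMap.one_apply, ContinuousLinearMap.zero_apply] at h1 h2
    rw [h1, h2]
  -- the extended left-multiplication by `a` is a unit
  have hinj : ∀ b : A, b ≠ 0 → Function.Injective (Lhat b) := by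
    intro b hb y z h
    obtain ⟨c, hc, hcb⟩ := hlow b hb
    have := hcb (y - z)
    rw [map_sub, h, sub_self, norm_zero] at this
    have := le_antisymm (by nlinarith [norm_nonneg (y - z)]) (norm_nonneg (y - z))
    rwa [norm_eq_zero, sub_eq_zero] at this
  have hclosedrange : ∀ b : A, b ≠ 0 → IsClosed (Set.range (Lhat b)) := by
    intro b hb
    obtain ⟨c, hc, hcb⟩ := hlow b hb
    have halip : AntilipschitzWith (NNReal.mk c hc.le)⁻¹ (Lhat b) := by
      refine ContinuousLinearMap.antilipschitz_of_bound _ fun y => ?_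
      rw [NNReal.coe_inv, NNReal.coe_mk]
      rw [le_inv_mul_iff₀ hc]
      exact hcb y
    exact halip.isClosed_range (Lhat b).uniformContinuous
  have hUa : IsUnit (Lhat a) := by
    rw [ContinuousLinearMap.isUnit_iff_bijective]
    refine ⟨hinj a ha0, fun y => ?_⟩
    have hsub : Set.range (⇑i) ⊆ Set.range (Lhat a) := by
      rintro _ ⟨x, rfl⟩
      obtain ⟨z, hz⟩ := ha.surjective x
      exact ⟨i z, by rw [hLi]; exact congrArg i hz⟩
    have : y ∈ closure (Set.range (Lhat a)) :=
      closure_mono hsub (dense y)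
    rwa [(hclosedrange a ha0).closure_eq] at this
  -- every nonzero element gives a unit
  have hunit : ∀ b : A, b ≠ 0 → IsUnit (Lhat b) := by
    intro b hb
    by_cases hdep : ∃ s : ℂ, b = s • a
    · obtain ⟨s, rfl⟩ := hdep
      have hs : s ≠ 0 := by rintro rfl; simp at hb
      obtain ⟨U, hU⟩ := hUa
      haveI hst : IsScalarTower ℂ (B →L[ℂ] B) (B →L[ℂ] B) := IsScalarTower.right
      haveI hsc : SMulCommClass ℂ (B →L[ℂ] B) (B →L[ℂ] B) := Algebra.to_smulCommClass
      rw [hsmul]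
      refine ⟨⟨s • (U : B →L[ℂ] B), s⁻¹ • ((U⁻¹ : (B →L[ℂ] B)ˣ) : B →L[ℂ] B), ?_, ?_⟩, ?_⟩
      · rw [smul_mul_assoc, mul_smul_comm, smul_smul, mul_inv_cancel₀ hs, one_smul, U.mul_inv]
      · rw [smul_mul_assoc, mul_smul_comm, smul_smul, inv_mul_cancel₀ hs, one_smul, U.inv_mul]
      · show s • (U : B →L[ℂ] B) = s • Lhat a
        rw [hU]
    · push_neg at hdep
      set w : ℂ → A := fun t => a + t • (b - a) with hw
      have hw0 : ∀ t : ℂ, w t ≠ 0 := by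
        intro t h
        simp only [hw] at h
        rcases eq_or_ne t 0 with rfl | ht
        · simp at h; exact ha0 h
        · refine hdep (1 - t⁻¹) ?_
          have h3 := congrArg (fun z => t⁻¹ • z) h
          simp only [smul_add, smul_smul, inv_mul_cancel₀ ht, one_smul, smul_zero] at h3
          have h4 : b = a - t⁻¹ • a := by
            have h5 : t⁻¹ • a + (b - a) = 0 := h3
            have := eq_neg_of_add_eq_zero_right h5
            rw [← neg_eq_iff_eq_neg] at this
            rw [← this]; abel
          rw [h4, sub_smul, one_smul]
      set Λ : Set ℂ := {t | IsUnit (Lhat (w t))} with hΛ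
      have hsub' : Lhat (b - a) = Lhat b - Lhat a := map_sub LhatL b a
      have hwL : ∀ t : ℂ, Lhat (w t) = Lhat a + t • (Lhat b - Lhat a) := by
        intro t
        show Lhat (a + t • (b - a)) = _
        rw [hadd, hsmul, hsub']
      have hcont : Continuous fun t : ℂ => Lhat (w t) := by
        simp only [hwL]
        exact continuous_const.add (continuous_id.smul continuous_const)
      have hopen : IsOpen Λ := Units.isOpen.preimage hcont
      have hclosed : IsClosed Λ := by
        rw [← isOpen_compl_iff, Metric.isOpen_iff]
        intro t ht
        obtain ⟨c, hc, hcb⟩ := hlow (w t) (hw0 t)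
        set M := ‖Lhat b - Lhat a‖ with hM
        have hM0 : (0:ℝ) ≤ M := norm_nonneg _
        refine ⟨c / (2 * (M + 1)), by positivity, fun s hs => ?_⟩
        simp only [Set.mem_compl_iff, hΛ, Set.mem_setOf_eq] at ht ⊢
        intro hus
        apply ht
        obtain ⟨U, hU⟩ := hus
        rw [Metric.mem_ball] at hs
        have hdist : ‖Lhat (w t) - Lhat (w s)‖ ≤ dist s t * M := by
          rw [hwL t, hwL s]
          have he : Lhat a + t • (Lhat b - Lhat a) - (Lhat a + s • (Lhat b - Lhat a))
              = (t - s) • (Lhat b - Lhat a) := by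
            rw [sub_smul]; abel
          rw [he]
          rw [norm_smul (t - s) (Lhat b - Lhat a), dist_comm, Complex.dist_eq,
            ← hM]
        have hdc : dist s t * M ≤ c / 2 := by
          have h1 : dist s t * M ≤ dist s t * (M + 1) := by
            nlinarith [dist_nonneg (x := s) (y := t)]
          have h2 : dist s t * (M + 1) ≤ (c / (2 * (M + 1))) * (M + 1) := by
            nlinarith
          have h3 : (c / (2 * (M + 1))) * (M + 1) = c / 2 := by field_simp
          linarith
        have hlows : ∀ y : B, (c/2) * ‖y‖ ≤ ‖Lhat (w s) y‖ := by
          intro y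
          have h1 : ‖Lhat (w t) y - Lhat (w s) y‖ ≤ (c/2) * ‖y‖ := by
            rw [← ContinuousLinearMap.sub_apply]
            calc ‖(Lhat (w t) - Lhat (w s)) y‖ ≤ ‖Lhat (w t) - Lhat (w s)‖ * ‖y‖ :=
                  (Lhat (w t) - Lhat (w s)).le_opNorm y
              _ ≤ (c/2) * ‖y‖ := by
                  apply mul_le_mul_of_nonneg_right _ (norm_nonneg y)
                  linarith
          have h2 := hcb y
          have h3 := norm_sub_norm_le (Lhat (w t) y) (Lhat (w s) y)
          linarith
        have hUinv : ‖((U⁻¹ : (B →L[ℂ] B)ˣ) : B →L[ℂ] B)‖ ≤ 2/c := by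
          apply ContinuousLinearMap.opNorm_le_bound _ (by positivity)
          intro y
          have h5 : Lhat (w s) (((U⁻¹ : (B →L[ℂ] B)ˣ) : B →L[ℂ] B) y) = y := by
            rw [← hU, ← ContinuousLinearMap.mul_apply, U.mul_inv,
              ContinuousLinearMap.one_apply]
          have h6 := hlows (((U⁻¹ : (B →L[ℂ] B)ˣ) : B →L[ℂ] B) y)
          rw [h5] at h6
          rw [show (2:ℝ)/c * ‖y‖ = ‖y‖ / (c/2) by field_simp,
            le_div_iff₀ (by positivity)]
          linarith
        have hUne : ((U⁻¹ : (B →L[ℂ] B)ˣ) : B →L[ℂ] B) ≠ 0 := by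
          intro h0
          have h1 : (1 : B →L[ℂ] B) = 0 := by rw [← U.inv_mul, h0, zero_mul]
          exact one_ne_zero h1
        have hUpos : (0:ℝ) < ‖((U⁻¹ : (B →L[ℂ] B)ˣ) : B →L[ℂ] B)‖ :=
          norm_pos_iff.mpr hUne
        have hinvge : c/2 ≤ ‖((U⁻¹ : (B →L[ℂ] B)ˣ) : B →L[ℂ] B)‖⁻¹ := by
          rw [show (c:ℝ)/2 = (2/c)⁻¹ by rw [inv_div]]
          exact inv_anti₀ hUpos hUinv
        have hnear : ‖Lhat (w t) - (U : B →L[ℂ] B)‖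
            < ‖((U⁻¹ : (B →L[ℂ] B)ˣ) : B →L[ℂ] B)‖⁻¹ := by
          rw [hU]
          have h7 : dist s t * M < c/2 := by
            have h8 : dist s t * M ≤ dist s t * (M+1) := by
              nlinarith [dist_nonneg (x := s) (y := t)]
            have h9 : dist s t * (M+1) < (c / (2*(M+1))) * (M+1) := by
              apply mul_lt_mul_of_pos_right hs; linarith
            have h10 : (c / (2 * (M + 1))) * (M + 1) = c / 2 := by field_simp
            linarith
          linarith [hdist]
        have := (U.ofNearby (Lhat (w t)) hnear).isUnit
        simpa using this
      have h0 : (0:ℂ) ∈ Λ := by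
        have hw0' : w 0 = a := by simp [hw]
        simp only [hΛ, Set.mem_setOf_eq, hw0']
        exact hUa
      have huniv : Λ = Set.univ := IsClopen.eq_univ ⟨hclosed, hopen⟩ ⟨0, h0⟩
      have h1 : (1:ℂ) ∈ Λ := huniv ▸ Set.mem_univ 1
      have hw1 : w 1 = b := by simp [hw]
      simpa only [hΛ, Set.mem_setOf_eq, hw1] using h1
  -- every element of A is a scalar multiple of a
  haveI : Nontrivial B := hBnt
  haveI : Nontrivial (B →L[ℂ] B) := hRnt
  have hspan : ∀ x : A, ∃ s : ℂ, x = s • a := by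
    intro x
    set Ua := hUa.unit with hUad
    set T : B →L[ℂ] B := Lhat x * ((Ua⁻¹ : (B →L[ℂ] B)ˣ) : B →L[ℂ] B) with hT
    obtain ⟨l, hl⟩ := spectrum.nonempty T
    rw [spectrum.mem_iff] at hl
    refine ⟨l, ?_⟩
    by_contra hne
    have hc0 : l • a - x ≠ 0 := by
      intro h
      exact hne (by rw [← sub_eq_zero]; rw [← neg_sub]; rw [h, neg_zero])
    apply hl
    have h1 : Lhat (l • a - x) = l • Lhat a - Lhat x := by
      have := LhatL.map_sub (l • a) x
      have h2 := LhatL.map_smul l a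
      rw [show Lhat (l • a - x) = LhatL (l • a - x) from rfl, this, h2]
      rfl
    have hkey : algebraMap ℂ (B →L[ℂ] B) l - T
        = Lhat (l • a - x) * ((Ua⁻¹ : (B →L[ℂ] B)ˣ) : B →L[ℂ] B) := by
      haveI hst : IsScalarTower ℂ (B →L[ℂ] B) (B →L[ℂ] B) := IsScalarTower.right
      rw [h1, sub_mul, smul_mul_assoc]
      have h3 : (Lhat a) * ((Ua⁻¹ : (B →L[ℂ] B)ˣ) : B →L[ℂ] B) = 1 := by
        rw [show Lhat a = (Ua : B →L[ℂ] B) from (hUa.unit_spec).symm, Ua.mul_inv]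
      rw [h3, hT, Algebra.algebraMap_eq_smul_one]
    rw [hkey]
    exact (hunit _ hc0).mul (Units.isUnit _)
  -- the isomorphism
  obtain ⟨μ, hμ⟩ := hspan (m a a)
  have hμ0 : μ ≠ 0 := by
    rintro rfl
    rw [zero_smul] at hμ
    exact ha0 (ha.injective (by simpa using hμ))
  have hinjA : Function.Injective (LinearMap.toSpanSingleton ℂ A a) := by
    intro s t h
    exact smul_left_injective ℂ ha0 h
  let f : ℂ ≃ₗ[ℂ] A := LinearEquiv.ofBijective (LinearMap.toSpanSingleton ℂ A a)
    ⟨hinjA, fun x => by obtain ⟨s, hs⟩ := hspan x; exact ⟨s, hs.symm⟩⟩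
  have hf : ∀ s : ℂ, f.symm (s • a) = s := by
    intro s
    have h1 : f s = s • a := rfl
    rw [← h1, LinearEquiv.symm_apply_apply]
  refine ⟨f.symm ≪≫ₗ LinearEquiv.smulOfNeZero ℂ ℂ μ hμ0, ?_⟩
  intro x y
  obtain ⟨s, rfl⟩ := hspan x
  obtain ⟨t, rfl⟩ := hspan y
  have hm : m (s • a) (t • a) = ((s * t) * μ) • a := by
    simp only [map_smul, LinearMap.smul_apply, hμ, smul_smul]
    ring_nf
  simp only [LinearEquiv.trans_apply, hm, hf]
  show μ • (s * t * μ) = (μ • s) * (μ • t)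
  simp only [smul_eq_mul]
  ring
end

section
/- Let A be a normed algebra over ℂ of left linear division such that the set of left topological linear zero divisors of A, with the metric induced by the norm, is a complete subset of A. Then A is isomorphic as a ℂ-algebra to ℂ. -/
/-!
STATEMENT 1: Let `A` be a normed algebra over `ℂ` of left linear division (i.e. `A ≠ 0`
and left multiplication by any nonzero element is a linear bijection) such that the set
of left topological linear zero divisors of `A` is a complete subset of `A` (with the
metric induced by the norm).  Then `A` is isomorphic as a `ℂ`-algebra to `ℂ`.
-/

open Filter Topology

namespace TLZDAux
open Metric Set
set_option linter.unusedSectionVars false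
set_option maxHeartbeats 1000000

section
variable {A : Type*} [NormedAddCommGroup A] [NormedSpace ℂ A] [Nontrivial A]
  (m : A →ₗ[ℂ] A →ₗ[ℂ] A)

noncomputable def cf (a : A) : ℝ := sInf ((fun x => ‖m a x‖) '' sphere (0 : A) 1)

lemma img_ne (a : A) : ((fun x => ‖m a x‖) '' sphere (0:A) 1).Nonempty :=
  (NormedSpace.sphere_nonempty.mpr zero_le_one).image _

lemma img_bdd (a : A) : BddBelow ((fun x => ‖m a x‖) '' sphere (0:A) 1) :=
  ⟨0, by rintro y ⟨x, -, rfl⟩; exact norm_nonneg _⟩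

lemma cf_nonneg (a : A) : 0 ≤ cf m a :=
  le_csInf (img_ne m a) (by rintro y ⟨x, -, rfl⟩; exact norm_nonneg _)

lemma cf_le (a : A) {x : A} (hx : ‖x‖ = 1) : cf m a ≤ ‖m a x‖ :=
  csInf_le (img_bdd m a) ⟨x, by simpa [mem_sphere_iff_norm] using hx, rfl⟩

lemma le_cf {a : A} {r : ℝ} (h : ∀ x : A, ‖x‖ = 1 → r ≤ ‖m a x‖) : r ≤ cf m a :=
  le_csInf (img_ne m a) (by rintro y ⟨x, hx, rfl⟩; exact h x (by simpa [mem_sphere_iff_norm] using hx))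

lemma cf_mul_norm_le (a x : A) : cf m a * ‖x‖ ≤ ‖m a x‖ := by
  rcases eq_or_ne x 0 with rfl | hx
  · simp
  · have hn : ‖x‖ ≠ 0 := norm_ne_zero_iff.mpr hx
    have h1 : ‖(‖x‖⁻¹ : ℂ) • x‖ = 1 := by
      rw [norm_smul]
      simp [Complex.norm_real, abs_of_nonneg (norm_nonneg x), hn]
    have := cf_le m a h1
    rw [map_smul, norm_smul] at this
    simp only [Complex.norm_real, norm_inv, Real.norm_eq_abs, abs_of_nonneg (norm_nonneg x)] at this
    have h3 := mul_le_mul_of_nonneg_right this (norm_nonneg x)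
    calc cf m a * ‖x‖ ≤ ‖x‖⁻¹ * ‖m a x‖ * ‖x‖ := h3
    _ = ‖m a x‖ := by field_simp

lemma cf_zero : cf m (0 : A) = 0 := by
  obtain ⟨x, hx⟩ := NormedSpace.sphere_nonempty (E := A) (x := 0) (r := 1) |>.mpr zero_le_one
  have h := cf_le m 0 (by simpa [mem_sphere_iff_norm] using hx)
  simp only [map_zero, LinearMap.zero_apply, norm_zero] at h
  exact le_antisymm h (cf_nonneg m 0)

lemma cf_le_add (hnorm : ∀ x y : A, ‖m x y‖ ≤ ‖x‖ * ‖y‖) (a b : A) :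
    cf m a ≤ cf m b + ‖a - b‖ := by
  rw [← sub_le_iff_le_add]
  refine le_cf m (fun x hx => ?_)
  rw [sub_le_iff_le_add]
  have h1 : m a x = m b x + m (a - b) x := by
    rw [map_sub]; simp
  calc cf m a ≤ ‖m a x‖ := cf_le m a hx
  _ ≤ ‖m b x‖ + ‖m (a - b) x‖ := by rw [h1]; exact norm_add_le _ _
  _ ≤ ‖m b x‖ + ‖a - b‖ := by
      have := hnorm (a - b) x
      rw [hx, mul_one] at this
      linarith

lemma le_cf_smul (t : ℂ) (b : A) : ‖t‖ * cf m b ≤ cf m (t • b) := by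
  refine le_cf m (fun x hx => ?_)
  rw [map_smul, LinearMap.smul_apply, norm_smul]
  exact mul_le_mul_of_nonneg_left (cf_le m b hx) (norm_nonneg t)

lemma mem_Z_iff (a : A) :
    a ∈ {a : A | ∃ x : ℕ → A, (∀ n, ‖x n‖ = 1) ∧ Tendsto (fun n => m a (x n)) atTop (𝓝 0)} ↔
    cf m a = 0 := by
  constructor
  · rintro ⟨x, hx1, hx2⟩
    have hn : Tendsto (fun n => ‖m a (x n)‖) atTop (𝓝 0) := by
      simpa using hx2.norm
    have hle : cf m a ≤ 0 := ge_of_tendsto hn (Eventually.of_forall fun n => cf_le m a (hx1 n))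
    exact le_antisymm hle (cf_nonneg m a)
  · intro h
    have H : ∀ n : ℕ, ∃ x : A, ‖x‖ = 1 ∧ ‖m a x‖ < 1/(n+1) := by
      intro n
      have hpos : cf m a < 1/(n+1) := by rw [h]; positivity
      obtain ⟨y, ⟨x, hx, rfl⟩, hy⟩ := exists_lt_of_csInf_lt (img_ne m a) hpos
      exact ⟨x, by simpa [mem_sphere_iff_norm] using hx, hy⟩
    choose x hx1 hx2 using H
    refine ⟨x, hx1, ?_⟩
    rw [tendsto_zero_iff_norm_tendsto_zero]
    refine squeeze_zero (fun n => norm_nonneg _) (fun n => (hx2 n).le) ?_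
    simpa using tendsto_one_div_add_atTop_nhds_zero_nat (𝕜 := ℝ)


variable (cf_nonneg : ∀ a : A, 0 ≤ cf m a)
variable (cf_mul_norm_le : ∀ a x : A, cf m a * ‖x‖ ≤ ‖m a x‖)
variable (cf_zero : cf m (0 : A) = 0)
variable (cf_le_add : ∀ a b : A, cf m a ≤ cf m b + ‖a - b‖)
variable (le_cf_smul : ∀ (t : ℂ) (b : A), ‖t‖ * cf m b ≤ cf m (t • b))

include cf_nonneg cf_mul_norm_le cf_zero cf_le_add le_cf_smul in
lemma exists_cf_eq_zero
    (hdiv : ∀ a : A, a ≠ 0 → Function.Bijective (fun x => m a x))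
    {b : A} (hb : 0 < cf m b) (a : A) : ∃ t : ℂ, cf m (a - t • b) = 0 := by
  by_contra hcon
  push_neg at hcon
  have hbne : b ≠ 0 := by
    intro h; rw [h, cf_zero] at hb; exact lt_irrefl _ hb
  have hbpos : 0 < ‖b‖ := norm_pos_iff.mpr hbne
  set g : ℂ → A := fun t => a - t • b with hg
  have hcpos : ∀ t, 0 < cf m (g t) := fun t => lt_of_le_of_ne (cf_nonneg _) (Ne.symm (hcon t))
  have hgne : ∀ t, g t ≠ 0 := by
    intro t h0
    have h1 := hcpos t
    rw [h0, cf_zero] at h1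
    exact lt_irrefl _ h1
  have hbij : ∀ t, Function.Bijective (fun x => m (g t) x) := fun t => hdiv (g t) (hgne t)
  classical
  set J : ℂ → A → A := fun t => Function.surjInv (hbij t).2 with hJdef
  have hminv : ∀ (t : ℂ) (y : A), m (g t) (J t y) = y := fun t y => Function.surjInv_eq (hbij t).2 y
  have hnb : ∀ (t : ℂ) (y : A), cf m (g t) * ‖J t y‖ ≤ ‖y‖ := by
    intro t y
    have h1 := cf_mul_norm_le (g t) (J t y)
    rwa [hminv] at h1
  have hgdecomp : ∀ t s : ℂ, g t = g s + (s - t) • b := by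
    intro t s
    show a - t • b = (a - s • b) + (s - t) • b
    module
  have happly : ∀ t s : ℂ, ∀ z : A, m (g t) z = m (g s) z + (s - t) • m b z := by
    intro t s z
    conv_lhs => rw [hgdecomp t s]
    rw [map_add, map_smul]
    simp
  have hdiff : ∀ t s : ℂ, ∀ y : A, J t y - J s y = (t - s) • J t (m b (J s y)) := by
    intro t s y
    apply (hbij t).1
    show m (g t) (J t y - J s y) = m (g t) ((t - s) • J t (m b (J s y)))
    rw [map_sub, map_smul, hminv, hminv, happly t s (J s y), hminv]
    module
  have hcf_lip : ∀ t s : ℂ, cf m (g s) - ‖t - s‖ * ‖b‖ ≤ cf m (g t) := by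
    intro t s
    have h1 := cf_le_add (g s) (g t)
    have h2 : g s - g t = (t - s) • b := by
      show (a - s • b) - (a - t • b) = (t - s) • b
      module
    rw [h2, norm_smul] at h1
    linarith
  -- continuity of J · y
  have hcont : ∀ (y : A) (s : ℂ), Tendsto (fun t => J t y) (𝓝 s) (𝓝 (J s y)) := by
    intro y s
    rw [← tendsto_sub_nhds_zero_iff]
    have hδ : 0 < cf m (g s) / (2 * (‖b‖ + 1)) := div_pos (hcpos s) (by positivity)
    have hev : ∀ᶠ t in 𝓝 s, ‖J t y - J s y‖ ≤ ‖t - s‖ * (2 * ‖m b (J s y)‖ / cf m (g s)) := by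
      filter_upwards [Metric.ball_mem_nhds s hδ] with t ht
      rw [Metric.mem_ball, dist_eq_norm] at ht
      have hct : cf m (g s) / 2 ≤ cf m (g t) := by
        have h1 := hcf_lip t s
        have h2 : ‖t - s‖ * ‖b‖ ≤ cf m (g s) / 2 := by
          have h3 : ‖t - s‖ * ‖b‖ ≤ (cf m (g s) / (2 * (‖b‖ + 1))) * ‖b‖ := by
            apply mul_le_mul_of_nonneg_right ht.le (norm_nonneg b)
          have h4 : (cf m (g s) / (2 * (‖b‖ + 1))) * ‖b‖ ≤ cf m (g s) / 2 := by
            rw [div_mul_eq_mul_div, div_le_div_iff₀ (by positivity) (by norm_num)]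
            nlinarith [(hcpos s).le, hbpos]
          linarith
        linarith
      rw [hdiff t s y, norm_smul]
      have h3 : ‖J t (m b (J s y))‖ ≤ 2 * ‖m b (J s y)‖ / cf m (g s) := by
        rw [le_div_iff₀ (hcpos s)]
        have h4 : ‖J t (m b (J s y))‖ * (cf m (g s) / 2) ≤ ‖m b (J s y)‖ := by
          calc ‖J t (m b (J s y))‖ * (cf m (g s) / 2)
              ≤ ‖J t (m b (J s y))‖ * cf m (g t) :=
                mul_le_mul_of_nonneg_left hct (norm_nonneg _)
          _ = cf m (g t) * ‖J t (m b (J s y))‖ := by ring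
          _ ≤ ‖m b (J s y)‖ := hnb t _
        nlinarith
      exact mul_le_mul_of_nonneg_left h3 (norm_nonneg _)
    refine squeeze_zero_norm' hev ?_
    have h5 : Tendsto (fun t : ℂ => ‖t - s‖ * (2 * ‖m b (J s y)‖ / cf m (g s))) (𝓝 s)
        (𝓝 (‖s - s‖ * (2 * ‖m b (J s y)‖ / cf m (g s)))) :=
      (((continuous_id.sub continuous_const).norm).mul continuous_const).tendsto s
    simpa using h5
  -- the dual functional
  have hr0 : J 0 b ≠ 0 := by
    intro h
    have h1 := hminv 0 b
    rw [h, map_zero] at h1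
    exact hbne h1.symm
  obtain ⟨φ, hφnorm, hφval⟩ := exists_dual_vector ℂ (J 0 b) (norm_ne_zero_iff.mpr hr0)
  set F : ℂ → ℂ := fun t => φ (J t b) with hF
  have hderiv : ∀ s : ℂ, HasDerivAt F (φ (J s (m b (J s b)))) s := by
    intro s
    rw [hasDerivAt_iff_tendsto_slope]
    have heqset : ∀ t ∈ ({s}ᶜ : Set ℂ), slope F s t = φ (J t (m b (J s b))) := by
      intro t ht
      have hts : t - s ≠ 0 := sub_ne_zero.mpr ht
      rw [slope_def_field, hF]
      simp only
      rw [← map_sub, hdiff t s b, map_smul]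
      rw [smul_eq_mul]
      field_simp
    have heq : slope F s =ᶠ[𝓝[≠] s] fun t => φ (J t (m b (J s b))) :=
      eventually_mem_nhdsWithin.mono heqset
    have hlim : Tendsto (fun t => φ (J t (m b (J s b)))) (𝓝[≠] s)
        (𝓝 (φ (J s (m b (J s b))))) :=
      ((φ.continuous.tendsto _).comp (hcont _ s)).mono_left nhdsWithin_le_nhds
    exact hlim.congr' heq.symm
  have hdiffable : Differentiable ℂ F := fun s => (hderiv s).differentiableAt
  -- lower bound on cf along the line
  have hlow : ∀ t : ℂ, ‖t‖ * cf m b - ‖a‖ ≤ cf m (g t) := by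
    intro t
    have h1 := le_cf_smul (-t) b
    have h2 := cf_le_add ((-t) • b) (g t)
    have h3 : (-t) • b - g t = -a := by
      show (-t) • b - (a - t • b) = -a
      module
    rw [h3, norm_neg] at h2
    rw [norm_neg] at h1
    linarith
  -- bounded range
  set R : ℝ := (‖a‖ + 1) / cf m b with hR
  have hfar : ∀ t : ℂ, R ≤ ‖t‖ → ‖F t‖ ≤ ‖φ‖ * ‖b‖ := by
    intro t ht
    have h0 : ‖a‖ + 1 ≤ ‖t‖ * cf m b := by
      have h1 : ((‖a‖ + 1) / cf m b) * cf m b = ‖a‖ + 1 := by field_simp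
      calc ‖a‖ + 1 = ((‖a‖ + 1) / cf m b) * cf m b := h1.symm
      _ ≤ ‖t‖ * cf m b := mul_le_mul_of_nonneg_right ht hb.le
    have h1 : (1:ℝ) ≤ cf m (g t) := by
      have := hlow t; linarith
    have h2 : ‖J t b‖ ≤ ‖b‖ := by
      have h3 := hnb t b
      nlinarith [norm_nonneg (J t b)]
    calc ‖F t‖ ≤ ‖φ‖ * ‖J t b‖ := φ.le_opNorm _
    _ ≤ ‖φ‖ * ‖b‖ := mul_le_mul_of_nonneg_left h2 (norm_nonneg φ)
  obtain ⟨M, hM⟩ := (isCompact_closedBall (0:ℂ) R).exists_bound_of_continuousOn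
    hdiffable.continuous.continuousOn
  have hbdd : Bornology.IsBounded (range F) := by
    rw [isBounded_iff_forall_norm_le]
    refine ⟨max M (‖φ‖ * ‖b‖), ?_⟩
    rintro y ⟨t, rfl⟩
    rcases le_total ‖t‖ R with h | h
    · exact le_max_of_le_left (hM t (by simpa [Metric.mem_closedBall, dist_eq_norm] using h))
    · exact le_max_of_le_right (hfar t h)
  have hconst := hdiffable.apply_eq_apply_of_bounded hbdd
  -- derive contradiction with a large real parameter
  set r0n : ℝ := ‖J 0 b‖ with hr0n
  have hr0pos : 0 < r0n := norm_pos_iff.mpr hr0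
  set T : ℝ := (‖a‖ + ‖b‖ / r0n + 1) / cf m b with hT
  have hTnn : 0 ≤ T := by positivity
  have hnormT : ‖(T:ℂ)‖ = T := by
    rw [Complex.norm_real, Real.norm_eq_abs, abs_of_nonneg hTnn]
  have hcT : ‖b‖ / r0n + 1 ≤ cf m (g (T:ℂ)) := by
    have h1 := hlow (T:ℂ)
    rw [hnormT] at h1
    have h2 : T * cf m b = ‖a‖ + ‖b‖ / r0n + 1 := by
      rw [hT]; field_simp
    linarith
  have hc1pos : 0 < cf m (g (T:ℂ)) := hcpos _
  have hJT : ‖J (T:ℂ) b‖ < r0n := by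
    have h2 : ‖J (T:ℂ) b‖ ≤ ‖b‖ / cf m (g (T:ℂ)) := by
      rw [le_div_iff₀ hc1pos]
      have := hnb (T:ℂ) b
      linarith [hnb (T:ℂ) b]
    have h3 : ‖b‖ / cf m (g (T:ℂ)) < r0n := by
      rw [div_lt_iff₀ hc1pos]
      have h4 : r0n * (‖b‖ / r0n + 1) = ‖b‖ + r0n := by field_simp
      nlinarith [mul_le_mul_of_nonneg_left hcT hr0pos.le]
    linarith
  have hF0 : F 0 = (r0n : ℂ) := by
    rw [hF]
    simpa using hφval
  have hFeq : F 0 = F (T:ℂ) := hconst 0 (T:ℂ)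
  have hfinal : r0n ≤ ‖φ‖ * ‖J (T:ℂ) b‖ := by
    have h1 : ‖F (T:ℂ)‖ = r0n := by
      rw [← hFeq, hF0, Complex.norm_real, Real.norm_eq_abs, abs_of_nonneg hr0pos.le]
    rw [← h1]
    exact φ.le_opNorm _
  rw [hφnorm, one_mul] at hfinal
  linarith


variable (mem_Z_iff : ∀ a : A,
    (a ∈ {a : A | ∃ x : ℕ → A, (∀ n, ‖x n‖ = 1) ∧ Tendsto (fun n => m a (x n)) atTop (𝓝 0)}) ↔
    cf m a = 0)
variable (key : ∀ {b : A}, 0 < cf m b → ∀ a : A, ∃ t : ℂ, cf m (a - t • b) = 0)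

include cf_nonneg cf_mul_norm_le cf_zero cf_le_add le_cf_smul mem_Z_iff key in
theorem main
    (hnorm : ∀ x y : A, ‖m x y‖ ≤ ‖x‖ * ‖y‖)
    (hdiv : ∀ a : A, a ≠ 0 → Function.Bijective (fun x => m a x))
    (hcomplete : IsComplete {a : A |
      ∃ x : ℕ → A, (∀ n, ‖x n‖ = 1) ∧ Tendsto (fun n => m a (x n)) atTop (𝓝 0)}) :
    ∃ e : A ≃ₗ[ℂ] ℂ, ∀ x y : A, e (m x y) = e x * e y := by
  classical
  set Z : Set A := {a : A | ∃ x : ℕ → A, (∀ n, ‖x n‖ = 1) ∧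
    Tendsto (fun n => m a (x n)) atTop (𝓝 0)} with hZdef
  have hmem : ∀ a : A, a ∈ Z ↔ cf m a = 0 := mem_Z_iff
  have htb : ∀ (b : A) (t : ℂ) (a : A), cf m (a - t • b) = 0 → ‖t‖ * cf m b ≤ ‖a‖ := by
    intro b t a h
    have h1 := le_cf_smul (-t) b
    have h2 := cf_le_add ((-t) • b) (a - t • b)
    have h3 : (-t) • b - (a - t • b) = -a := by module
    rw [h3, norm_neg, h] at h2
    rw [norm_neg] at h1
    linarith
  have hcompA : CompleteSpace A := by
    by_cases hex : ∃ b, b ∉ Z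
    · obtain ⟨b, hbZ⟩ := hex
      have hcb : 0 < cf m b :=
        lt_of_le_of_ne (cf_nonneg b) (fun h => hbZ ((hmem b).mpr h.symm))
      apply Metric.complete_of_cauchySeq_tendsto
      intro u hu
      have hdec : ∀ n, ∃ t : ℂ, cf m (u n - t • b) = 0 := fun n => key hcb (u n)
      choose t ht using hdec
      obtain ⟨R, hRpos, hR⟩ := cauchySeq_bdd hu
      have hubd : ∀ n, ‖u n‖ ≤ ‖u 0‖ + R := by
        intro n
        have h1 := hR n 0
        rw [dist_eq_norm] at h1
        have h2 := norm_sub_norm_le (u n) (u 0)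
        linarith
      have htbd : ∀ n, ‖t n‖ ≤ (‖u 0‖ + R) / cf m b := by
        intro n
        rw [le_div_iff₀ hcb]
        calc ‖t n‖ * cf m b ≤ ‖u n‖ := htb b (t n) (u n) (ht n)
        _ ≤ ‖u 0‖ + R := hubd n
      obtain ⟨l, -, ψ, hψmono, hψlim⟩ := tendsto_subseq_of_bounded
          (isBounded_closedBall (x := (0:ℂ)) (r := (‖u 0‖ + R) / cf m b))
          (x := t) (fun n => by simpa [Metric.mem_closedBall, dist_eq_norm] using htbd n)
      have huψ : CauchySeq (u ∘ ψ) := hu.comp_tendsto hψmono.tendsto_atTop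
      have hsc : CauchySeq (fun n => t (ψ n) • b) := by
        have : Tendsto (fun n => t (ψ n) • b) atTop (𝓝 (l • b)) := hψlim.smul_const b
        exact this.cauchySeq
      have hzc : CauchySeq (fun n => u (ψ n) - t (ψ n) • b) := by
        have h1 := huψ.add hsc.neg
        convert h1 using 1; funext n; simp [sub_eq_add_neg]
      obtain ⟨z, hzZ, hzlim⟩ := cauchySeq_tendsto_of_isComplete hcomplete
        (fun n => (hmem _).mpr (ht (ψ n))) hzc
      have hulim : Tendsto (u ∘ ψ) atTop (𝓝 (z + l • b)) := by
        have h2 := hzlim.add (hψlim.smul_const b)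
        exact h2.congr fun n => by simp [Function.comp]
      exact ⟨_, tendsto_nhds_of_cauchySeq_of_subseq hu hψmono.tendsto_atTop hulim⟩
    · push_neg at hex
      apply Metric.complete_of_cauchySeq_tendsto
      intro u hu
      obtain ⟨z, -, hzlim⟩ := cauchySeq_tendsto_of_isComplete hcomplete (fun n => hex (u n)) hu
      exact ⟨z, hzlim⟩
  have hZ0 : ∀ a ∈ Z, a = 0 := by
    intro a ha
    by_contra hne
    obtain ⟨x, hx1, hx2⟩ := ha
    set f : A →L[ℂ] A := LinearMap.mkContinuous (m a) ‖a‖ (fun y => hnorm a y) with hf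
    have hbijf : Function.Bijective f := hdiv a hne
    have hker : f.ker = ⊥ := by have := LinearMap.ker_eq_bot (f := (f : A →ₗ[ℂ] A)).mpr hbijf.1; exact this
    have hrange : f.range = ⊤ := by have := LinearMap.range_eq_top (f := (f : A →ₗ[ℂ] A)).mpr hbijf.2; exact this
    set e := ContinuousLinearEquiv.ofBijective f hker hrange with he
    have hxn : ∀ n, e.symm (m a (x n)) = x n := fun n =>
      ContinuousLinearEquiv.ofBijective_symm_apply_apply f hker hrange (x n)
    have hlim : Tendsto (fun n => x n) atTop (𝓝 0) := by
      have h2 : Tendsto (fun n => e.symm (m a (x n))) atTop (𝓝 (e.symm 0)) :=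
        (e.symm.continuous.tendsto 0).comp hx2
      rw [map_zero] at h2
      exact h2.congr hxn
    have h3 : Tendsto (fun n => ‖x n‖) atTop (𝓝 0) := by simpa using hlim.norm
    have h4 : Tendsto (fun _ : ℕ => (1:ℝ)) atTop (𝓝 0) := h3.congr hx1
    exact one_ne_zero (tendsto_nhds_unique tendsto_const_nhds h4)
  obtain ⟨b, hbne⟩ := exists_ne (0 : A)
  have hbZ : b ∉ Z := fun h => hbne (hZ0 b h)
  have hcb : 0 < cf m b := lt_of_le_of_ne (cf_nonneg b) fun h => hbZ ((hmem b).mpr h.symm)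
  have hspan : ∀ a : A, ∃ s : ℂ, a = s • b := by
    intro a
    obtain ⟨s, hs⟩ := key hcb a
    refine ⟨s, ?_⟩
    have h0 := hZ0 _ ((hmem _).mpr hs)
    rwa [sub_eq_zero] at h0
  obtain ⟨κ, hκeq⟩ := hspan (m b b)
  have hκ : κ ≠ 0 := by
    intro h
    apply hbne
    apply (hdiv b hbne).1
    show m b b = m b 0
    rw [map_zero, hκeq, h, zero_smul]
  set ψb : ℂ →ₗ[ℂ] A := LinearMap.toSpanSingleton ℂ A (κ⁻¹ • b) with hψb
  have hψapp : ∀ s : ℂ, ψb s = (s * κ⁻¹) • b := by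
    intro s
    rw [hψb, LinearMap.toSpanSingleton_apply, smul_smul]
  have hinj : Function.Injective ψb := by
    intro s1 s2 h
    rw [hψapp, hψapp] at h
    have h2 : s1 * κ⁻¹ = s2 * κ⁻¹ := smul_left_injective ℂ hbne h
    exact mul_right_cancel₀ (inv_ne_zero hκ) h2
  have hsurj : Function.Surjective ψb := by
    intro a
    obtain ⟨s, rfl⟩ := hspan a
    exact ⟨s * κ, by rw [hψapp, mul_assoc, mul_inv_cancel₀ hκ, mul_one]⟩
  set E := LinearEquiv.ofBijective ψb ⟨hinj, hsurj⟩ with hE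
  have hEsymm : ∀ w : ℂ, E.symm (w • b) = w * κ := by
    intro w
    rw [LinearEquiv.symm_apply_eq]
    show w • b = ψb (w * κ)
    rw [hψapp, mul_assoc, mul_inv_cancel₀ hκ, mul_one]
  refine ⟨E.symm, ?_⟩
  intro x y
  obtain ⟨s, rfl⟩ := hspan x
  obtain ⟨tt, rfl⟩ := hspan y
  have hmul : m (s • b) (tt • b) = (s * (tt * κ)) • b := by
    rw [show m (s • b) = s • m b from map_smul m s b, LinearMap.smul_apply, map_smul, hκeq,
      smul_smul, smul_smul, mul_assoc]
  rw [hmul, hEsymm, hEsymm, hEsymm]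
  ring


end

end TLZDAux

theorem normed_complex_left_division_algebra_complete_tlzd_iso_complex
    {A : Type*} [NormedAddCommGroup A] [NormedSpace ℂ A] [Nontrivial A]
    (m : A →ₗ[ℂ] A →ₗ[ℂ] A)
    (hnorm : ∀ x y : A, ‖m x y‖ ≤ ‖x‖ * ‖y‖)
    (hdiv : ∀ a : A, a ≠ 0 → Function.Bijective (fun x => m a x))
    (hcomplete : IsComplete {a : A |
      ∃ x : ℕ → A, (∀ n, ‖x n‖ = 1) ∧ Tendsto (fun n => m a (x n)) atTop (𝓝 0)}) :
    ∃ e : A ≃ₗ[ℂ] ℂ, ∀ x y : A, e (m x y) = e x * e y :=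
  TLZDAux.main m (TLZDAux.cf_nonneg m) (TLZDAux.cf_mul_norm_le m) (TLZDAux.cf_zero m)
    (TLZDAux.cf_le_add m hnorm) (TLZDAux.le_cf_smul m) (TLZDAux.mem_Z_iff m)
    (fun {b} hb a => TLZDAux.exists_cf_eq_zero m (TLZDAux.cf_nonneg m) (TLZDAux.cf_mul_norm_le m)
      (TLZDAux.cf_zero m) (TLZDAux.cf_le_add m hnorm) (TLZDAux.le_cf_smul m) hdiv hb a)
    hnorm hdiv hcomplete
end

section
/- Every noncommutative Jordan normed algebra over ℂ of left linear division is isomorphic as a ℂ-algebra to ℂ. -/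
/-!
STATEMENT 2: Every noncommutative Jordan normed algebra over `ℂ` of left linear division
is isomorphic as a `ℂ`-algebra to `ℂ`.  Here a normed `ℂ`-algebra is a complex normed
space with a bilinear product `m` satisfying `‖m x y‖ ≤ ‖x‖ * ‖y‖`; it is noncommutative
Jordan when it is flexible and satisfies the Jordan identity, and it is of left linear
division when `A ≠ 0` and left multiplication by any nonzero element is bijective.
-/

open Filter Topology Metric Set Bornology

section NCJordanAux

variable {A : Type*} [NormedAddCommGroup A] [NormedSpace ℂ A]


theorem flex_lin (m : A →ₗ[ℂ] A →ₗ[ℂ] A)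
    (hflex : ∀ x y : A, m (m x y) x = m x (m y x)) :
    ∀ p y q : A, m (m p y) q + m (m q y) p = m p (m y q) + m q (m y p) := by
  intro p y q
  have h := hflex (p + q) y
  have hp := hflex p y
  have hq := hflex q y
  simp only [map_add, LinearMap.add_apply] at h
  rw [hp, hq] at h
  linear_combination (norm := module) h

theorem jordan_lin (m : A →ₗ[ℂ] A →ₗ[ℂ] A)
    (hjordan : ∀ x y : A, m (m (m x x) y) x = m (m x x) (m y x)) :
    ∀ x c y : A, m (m (m x c + m c x) y) x + m (m (m x x) y) c
      = m (m x c + m c x) (m y x) + m (m x x) (m y c) := by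
  intro x c y
  have h1 := hjordan (x + c) y
  have h2 := hjordan (x - c) y
  have h3 := hjordan c y
  simp only [map_add, map_sub, LinearMap.add_apply, LinearMap.sub_apply] at h1 h2
  simp only [map_add, map_sub, LinearMap.add_apply, LinearMap.sub_apply]
  linear_combination (norm := module) ((2:ℂ)⁻¹) • (h1 - h2) - h3

/-- In a left linear division nc Jordan algebra, there is a two-sided unit. -/
theorem exists_unit (m : A →ₗ[ℂ] A →ₗ[ℂ] A)
    (hflex : ∀ x y : A, m (m x y) x = m x (m y x))
    (hjordan : ∀ x y : A, m (m (m x x) y) x = m (m x x) (m y x))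
    (hdiv : ∀ a : A, a ≠ 0 → Function.Bijective (fun x => m a x))
    [Nontrivial A] :
    ∃ u : A, u ≠ 0 ∧ (∀ x : A, m u x = x) ∧ (∀ x : A, m x u = x) := by
  classical
  obtain ⟨a, ha⟩ := exists_ne (0 : A)
  -- injectivity/killing helpers
  have inj : ∀ c : A, c ≠ 0 → ∀ {s t : A}, m c s = m c t → s = t := by
    intro c hc s t h
    exact (hdiv c hc).injective h
  have kill : ∀ s c : A, c ≠ 0 → m s c = 0 → s = 0 := by
    intro s c hc h
    by_contra hs
    exact hc ((hdiv s hs).injective (a₁ := c) (a₂ := 0)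
      (by simpa using h))
  have flin := flex_lin m hflex
  have jlin := jordan_lin m hjordan
  -- the candidate unit
  obtain ⟨u, hau⟩ := (hdiv a ha).surjective a
  simp only at hau    -- hau : m a u = a
  have hua : m u a = a := by
    have h := hflex a u
    rw [hau] at h
    exact (inj a ha h.symm)
  have hu0 : u ≠ 0 := by
    intro h
    rw [h] at hau
    simp at hau
    exact ha hau.symm
  have ha2 : m a a ≠ 0 := by
    intro h
    exact ha (inj a ha (by simpa using h))
  -- (a², y, u) = 0
  have HA : ∀ y, m (m (m a a) y) u = m (m a a) (m y u) := by
    intro y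
    have h := jlin a u y
    rw [hau, hua] at h
    have e : m (m (a + a) y) a = m (a + a) (m y a) := by
      simp only [map_add, LinearMap.add_apply, hflex a y]
    rw [e] at h
    exact add_left_cancel h
  -- u a² = a²
  have hua2 : m u (m a a) = m a a := by
    have h := flin a u (m a a)
    rw [hau, hua] at h
    have hj := hjordan a u
    rw [hua] at hj
    rw [hj] at h
    have h2 := add_right_cancel h
    exact (inj a ha h2).symm
  -- a² u = a²
  have ha2u : m (m a a) u = m a a := by
    have hj := hjordan a u
    rw [hua] at hj
    have h0 : m (m (m a a) u - m a a) a = 0 := by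
      rw [map_sub, LinearMap.sub_apply, hj, sub_self]
    have := kill _ a ha h0
    exact sub_eq_zero.mp this
  -- u² = u
  have huu : m u u = u := by
    have h := HA u
    rw [ha2u, ha2u] at h
    exact inj (m a a) ha2 (h.symm.trans ha2u.symm)
  -- pointwise g + H = 0 where g w = uw - u(uw), H w = (wu)u - wu
  have ghH : ∀ w : A, (m u w - m u (m u w)) + (m (m w u) u - m w u) = 0 := by
    intro w
    have h := flin u u w
    rw [huu] at h
    rw [sub_add_sub_comm, sub_eq_zero]
    linear_combination (norm := module) h
  -- E2 : g w = -H s for s = uw + wu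
  have E2 : ∀ w : A, (m u w - m u (m u w))
      + (m (m (m u w + m w u) u) u - m (m u w + m w u) u) = 0 := by
    intro w
    have h := jlin u w u
    simp only [huu] at h
    rw [sub_add_sub_comm, sub_eq_zero]
    linear_combination (norm := module) h
  -- the "Fix" lemma : for every x, σx := ux + xu - x satisfies u σx = σx and σx u = σx
  have sigma_fix : ∀ x : A, m u (m u x + m x u - x) = (m u x + m x u - x)
      ∧ m (m u x + m x u - x) u = (m u x + m x u - x) := by
    intro x
    have h1 := E2 x
    have h2 := ghH (m u x + m x u)
    -- g σ = 0
    have hgσ : m u (m u x + m x u - x) - m u (m u (m u x + m x u - x)) = 0 := by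
      have e : m u (m u x + m x u - x) - m u (m u (m u x + m x u - x))
          = (m u (m u x + m x u) - m u (m u (m u x + m x u)))
            - (m u x - m u (m u x)) := by
        simp only [map_add, map_sub, LinearMap.add_apply, LinearMap.sub_apply]
        module
      rw [e]
      linear_combination (norm := module) h2 - h1
    have hfix1 : m u (m u x + m x u - x) = (m u x + m x u - x) := by
      exact (inj u hu0 (sub_eq_zero.mp hgσ)).symm
    refine ⟨hfix1, ?_⟩
    have hHσ : m (m (m u x + m x u - x) u) u - m (m u x + m x u - x) u = 0 := by
      have h3 := ghH (m u x + m x u - x)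
      rw [hgσ, zero_add] at h3
      exact h3
    have h0 : m (m (m u x + m x u - x) u - (m u x + m x u - x)) u = 0 := by
      rw [map_sub, LinearMap.sub_apply, sub_eq_zero.mp hHσ, sub_self]
    exact sub_eq_zero.mp (kill _ u hu0 h0)
  -- J_half is zero
  have Jhalf : ∀ n : A, m u n + m n u = n → n = 0 := by
    intro n hn
    by_contra hnz
    have hn2 : m n n ≠ 0 := by
      intro h
      exact hnz (inj n hnz (by simpa using h))
    -- (n², y, u) = 0
    have Dn1 : ∀ y, m (m (m n n) y) u = m (m n n) (m y u) := by
      intro y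
      have h := jlin n u y
      rw [show m n u + m u n = n by rw [add_comm]; exact hn] at h
      rw [hflex n y] at h
      exact add_left_cancel h
    -- u n² = n²
    have un2 : m u (m n n) = m n n := by
      have h := flin u u (m n n)
      rw [huu] at h
      have hd := Dn1 u
      rw [huu] at hd
      rw [hd] at h
      exact (inj u hu0 (add_right_cancel h)).symm
    -- σ₂ = n² u
    have hσeq : m u (m n n) + m (m n n) u - m n n = m (m n n) u := by
      rw [un2]; abel
    obtain ⟨hσ1, hσ2⟩ := sigma_fix (m n n)
    rw [hσeq] at hσ1 hσ2
    -- n² u = n²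
    have h0 : m (m n n - m (m n n) u) u = 0 := by
      rw [map_sub, LinearMap.sub_apply, hσ2, sub_self]
    have n2u : m (m n n) u = m n n := (sub_eq_zero.mp (kill _ u hu0 h0)).symm
    -- final contradiction
    have hj := hjordan n u
    rw [n2u] at hj
    have hun : m u n = n := (inj (m n n) hn2 hj).symm
    have hnu : m n u = 0 := by
      have h5 := hn
      rw [hun] at h5
      exact (add_eq_left).mp h5
    exact hu0 ((hdiv n hnz).injective (a₁ := u) (a₂ := 0) (by simpa using hnu))
  -- conclude: u is a two-sided unit
  have main : ∀ x : A, m u x = x ∧ m x u = x := by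
    intro x
    obtain ⟨hσ1, hσ2⟩ := sigma_fix x
    have e1 : m u (x - (m u x + m x u - x)) = m u x - (m u x + m x u - x) := by
      rw [map_sub, hσ1]
    have e2 : m (x - (m u x + m x u - x)) u = m x u - (m u x + m x u - x) := by
      rw [map_sub, LinearMap.sub_apply, hσ2]
    have hn : m u (x - (m u x + m x u - x)) + m (x - (m u x + m x u - x)) u
        = x - (m u x + m x u - x) := by
      rw [e1, e2]; abel
    have h0 := Jhalf _ hn
    have hx : x = m u x + m x u - x := sub_eq_zero.mp h0
    constructor
    · conv_lhs => rw [hx]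
      exact hσ1.trans hx.symm
    · conv_lhs => rw [hx]
      exact hσ2.trans hx.symm
  exact ⟨u, hu0, fun x => (main x).1, fun x => (main x).2⟩



theorem jordan_lin' (m : A →ₗ[ℂ] A →ₗ[ℂ] A)
    (hjordan : ∀ x y : A, m (m (m x x) y) x = m (m x x) (m y x)) :
    ∀ x c y : A, m (m (m x c + m c x) y) x + m (m (m x x) y) c
      = m (m x c + m c x) (m y x) + m (m x x) (m y c) := by
  intro x c y
  have h1 := hjordan (x + c) y
  have h2 := hjordan (x - c) y
  have h3 := hjordan c y
  simp only [map_add, map_sub, LinearMap.add_apply, LinearMap.sub_apply] at h1 h2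
  simp only [map_add, map_sub, LinearMap.add_apply, LinearMap.sub_apply]
  linear_combination (norm := module) ((2:ℂ)⁻¹) • (h1 - h2) - h3

/-- Abstract resolvent computation. -/
theorem res_calc (m : A →ₗ[ℂ] A →ₗ[ℂ] A) (u zl zm rl rm : A) (δ : ℂ)
    (hul : ∀ w : A, m u w = w) (hur : ∀ w : A, m w u = w)
    (hzz : zm = zl - δ • u)
    (hrl : m zl rl = u) (hrm : m zm rm = u)
    (hz2rl : m (m zl zl) rl = zl) (hz2rm : m (m zm zm) rm = zm)
    (hP3m : ∀ y, m (m (m zm zm) y) rm = m (m zm zm) (m y rm)) :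
    m (m zm zm - (δ ^ 2) • u) (rm - rl - δ • m rl rm) = 0 := by
  -- square of zm in terms of zl
  have hm2 : m zm zm = m zl zl - (2 * δ) • zl + (δ ^ 2) • u := by
    rw [hzz]
    simp only [map_sub, map_smul, LinearMap.sub_apply, LinearMap.smul_apply, hur, hul]
    module
  have f2 : m (m zm zm) rl = zl - (2 * δ) • u + (δ ^ 2) • rl := by
    rw [hm2]
    simp only [map_sub, map_add, map_smul, LinearMap.sub_apply, LinearMap.add_apply,
      LinearMap.smul_apply, hz2rl, hrl, hul]
  have fz : m zl rm = u + δ • rm := by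
    have e : zl = zm + δ • u := by rw [hzz]; module
    rw [e]
    simp only [map_add, map_smul, LinearMap.add_apply, LinearMap.smul_apply, hrm, hul]
  have f3 : m (m zm zm) (m rl rm) = u - δ • rm + (δ ^ 2) • m rl rm := by
    rw [← hP3m rl, f2]
    simp only [map_sub, map_add, map_smul, LinearMap.sub_apply, LinearMap.add_apply,
      LinearMap.smul_apply, fz, hul]
    module
  have key : m (m zm zm) (rm - rl - δ • m rl rm)
      = (δ ^ 2) • (rm - rl - δ • m rl rm) := by
    simp only [map_sub, map_smul, LinearMap.sub_apply, LinearMap.smul_apply]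
    rw [hz2rm, f2, f3, hzz]
    module
  simp only [map_sub, map_smul, LinearMap.sub_apply, LinearMap.smul_apply] at key ⊢
  rw [hz2rm, f2, f3] at key ⊢
  simp only [hul]
  linear_combination (norm := module) key

theorem fac_calc (m : A →ₗ[ℂ] A →ₗ[ℂ] A) (u zm : A) (δ : ℂ)
    (hul : ∀ w : A, m u w = w) (hur : ∀ w : A, m w u = w) :
    m (zm - δ • u) (zm + δ • u) = m zm zm - (δ ^ 2) • u := by
  simp only [map_sub, map_add, map_smul, LinearMap.sub_apply, LinearMap.add_apply,
    LinearMap.smul_apply, hul, hur]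
  module

/-- Every element is a scalar multiple of the unit. -/
theorem forall_smul_unit (m : A →ₗ[ℂ] A →ₗ[ℂ] A)
    (hnorm : ∀ x y : A, ‖m x y‖ ≤ ‖x‖ * ‖y‖)
    (hflex : ∀ x y : A, m (m x y) x = m x (m y x))
    (hjordan : ∀ x y : A, m (m (m x x) y) x = m (m x x) (m y x))
    (hdiv : ∀ a : A, a ≠ 0 → Function.Bijective (fun x => m a x))
    {u : A} (hu0 : u ≠ 0) (hul : ∀ w : A, m u w = w) (hur : ∀ w : A, m w u = w) :
    ∀ x : A, ∃ c : ℂ, x = c • u := by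
  classical
  intro x
  by_contra hcon
  push_neg at hcon
  have inj : ∀ c : A, c ≠ 0 → ∀ {s t : A}, m c s = m c t → s = t := by
    intro c hc s t h
    exact (hdiv c hc).injective h
  have kill : ∀ s c : A, c ≠ 0 → m s c = 0 → s = 0 := by
    intro s c hc h
    by_contra hs
    exact hc ((hdiv s hs).injective (a₁ := c) (a₂ := 0) (by simpa using h))
  have jlin := jordan_lin' m hjordan
  have hz : ∀ lam : ℂ, x - lam • u ≠ 0 := fun lam => sub_ne_zero.mpr (hcon lam)
  choose r hr using fun lam : ℂ => (hdiv _ (hz lam)).surjective u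
  simp only at hr
  -- left inverse
  have hrz : ∀ lam : ℂ, m (r lam) (x - lam • u) = u := by
    intro lam
    set z := x - lam • u with hzdef
    have h := hflex z (r lam)
    rw [hr lam, hul] at h
    have h2 : m z (m (r lam) z) = m z u := by
      rw [hur]; exact h.symm
    exact inj _ (hz lam) h2
  -- z² r = z
  have hz2r : ∀ lam : ℂ, m (m (x - lam • u) (x - lam • u)) (r lam) = x - lam • u := by
    intro lam
    set z := x - lam • u with hzdef
    have hj := hjordan z (r lam)
    rw [hrz lam, hur] at hj
    have h0 : m (m (m z z) (r lam) - z) z = 0 := by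
      rw [map_sub m (m (m z z) (r lam)) z, LinearMap.sub_apply, hj, sub_self]
    exact sub_eq_zero.mp (kill _ _ (hz lam) h0)
  -- (z², y, r) = 0
  have hP3 : ∀ (lam : ℂ) (y : A), m (m (m (x - lam • u) (x - lam • u)) y) (r lam)
      = m (m (x - lam • u) (x - lam • u)) (m y (r lam)) := by
    intro lam y
    set z := x - lam • u with hzdef
    have h := jlin z (r lam) y
    rw [hr lam, hrz lam] at h
    have e : m (m (u + u) y) z = m (u + u) (m y z) := by
      simp only [map_add, LinearMap.add_apply, hul]
    rw [e] at h
    exact add_left_cancel h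
  -- the resolvent identity
  have resolvent : ∀ lam mu : ℂ, r mu = r lam + (mu - lam) • m (r lam) (r mu) := by
    intro lam mu
    have hzz : x - mu • u = (x - lam • u) - (mu - lam) • u := by module
    have hres := res_calc m u (x - lam • u) (x - mu • u) (r lam) (r mu) (mu - lam)
      hul hur hzz (hr lam) (hr mu) (hz2r lam) (hz2r mu) (fun y => hP3 mu y)
    by_cases hc : m (x - mu • u) (x - mu • u) - ((mu - lam) ^ 2) • u = 0
    · exfalso
      have hfac := fac_calc m u (x - mu • u) (mu - lam) hul hur
      rw [sub_eq_zero.mp hc] at hfac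
      have hfac0 : m ((x - mu • u) - (mu - lam) • u) ((x - mu • u) + (mu - lam) • u) = 0 := by
        rw [hfac, sub_self]
      have e1 : (x - mu • u) - (mu - lam) • u = x - (2 * mu - lam) • u := by module
      have e2 : (x - mu • u) + (mu - lam) • u = x - lam • u := by module
      rw [e1, e2] at hfac0
      exact hz lam (inj _ (hz (2 * mu - lam)) (s := x - lam • u) (t := 0) (by rw [map_zero]; exact hfac0))
    · have hE := inj _ hc (s := r mu - r lam - (mu - lam) • m (r lam) (r mu)) (t := 0)
        (by rw [map_zero]; exact hres)
      have := sub_eq_zero.mp hE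
      linear_combination (norm := module) this
  -- continuity of left multiplications
  have hMl : ∀ a : A, Continuous fun w : A => m a w := by
    intro a
    exact AddMonoidHomClass.continuous_of_bound (m a) ‖a‖ (fun w => hnorm a w)
  -- continuity of r
  have hcont : ∀ lam : ℂ, Filter.Tendsto r (𝓝 lam) (𝓝 (r lam)) := by
    intro lam
    have hKpos : (0:ℝ) < ‖r lam‖ + 1 := by positivity
    set K := ‖r lam‖ + 1 with hK
    have hloc : ∀ mu : ℂ, ‖mu - lam‖ ≤ 1 / (2 * K) → ‖r mu‖ ≤ 2 * K := by
      intro mu hmu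
      have h2 : ‖r mu‖ ≤ ‖r lam‖ + ‖mu - lam‖ * (‖r lam‖ * ‖r mu‖) := by
        calc ‖r mu‖ = ‖r lam + (mu - lam) • m (r lam) (r mu)‖ := by rw [← resolvent lam mu]
        _ ≤ ‖r lam‖ + ‖(mu - lam) • m (r lam) (r mu)‖ := norm_add_le _ _
        _ ≤ ‖r lam‖ + ‖mu - lam‖ * (‖r lam‖ * ‖r mu‖) := by
            rw [norm_smul]
            have h3 := hnorm (r lam) (r mu)
            have h4 : (0:ℝ) ≤ ‖mu - lam‖ := norm_nonneg _
            nlinarith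
      have h5 : ‖mu - lam‖ * (‖r lam‖ * ‖r mu‖) ≤ (1 / (2 * K)) * (K * ‖r mu‖) := by
        apply mul_le_mul hmu ?_ (by positivity) (by positivity)
        apply mul_le_mul_of_nonneg_right ?_ (norm_nonneg _)
        rw [hK]; linarith
      have h6 : (1 / (2 * K)) * (K * ‖r mu‖) = ‖r mu‖ / 2 := by
        field_simp
      rw [h6] at h5
      linarith
    have hev : ∀ᶠ mu in 𝓝 lam, ‖mu - lam‖ ≤ 1 / (2 * K) := by
      have hmem : Metric.closedBall lam (1 / (2 * K)) ∈ 𝓝 lam :=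
        Metric.closedBall_mem_nhds _ (by positivity)
      filter_upwards [hmem] with mu hmu
      simpa [Metric.mem_closedBall, dist_eq_norm] using hmu
    rw [tendsto_iff_norm_sub_tendsto_zero]
    apply squeeze_zero' (g := fun mu => ‖mu - lam‖ * (K * (2 * K)))
    · filter_upwards with mu
      exact norm_nonneg _
    · filter_upwards [hev] with mu hmu
      have e : r mu - r lam = (mu - lam) • m (r lam) (r mu) := by
        linear_combination (norm := module) resolvent lam mu
      rw [e, norm_smul]
      apply mul_le_mul_of_nonneg_left ?_ (norm_nonneg _)
      calc ‖m (r lam) (r mu)‖ ≤ ‖r lam‖ * ‖r mu‖ := hnorm _ _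
      _ ≤ K * (2 * K) := by
          apply mul_le_mul (by rw [hK]; linarith) (hloc mu hmu) (norm_nonneg _) (by positivity)
    · have h8 : Filter.Tendsto (fun mu : ℂ => ‖mu - lam‖) (𝓝 lam) (𝓝 0) := by
        have h9 := (continuous_id.sub (continuous_const (y := lam))).norm.tendsto lam
        simpa using h9
      simpa using h8.mul_const (K * (2 * K))
  -- differentiability of r
  have hderiv : ∀ lam : ℂ, HasDerivAt r (m (r lam) (r lam)) lam := by
    intro lam
    rw [hasDerivAt_iff_tendsto_slope]
    have hcongr : ∀ᶠ mu in 𝓝[≠] lam, m (r lam) (r mu) = slope r lam mu := by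
      filter_upwards [self_mem_nhdsWithin] with mu hmu
      have hne : mu - lam ≠ 0 := sub_ne_zero.mpr hmu
      rw [slope_def_module]
      have e : r mu - r lam = (mu - lam) • m (r lam) (r mu) := by
        linear_combination (norm := module) resolvent lam mu
      rw [e, smul_smul, inv_mul_cancel₀ hne, one_smul]
    apply Filter.Tendsto.congr' hcongr
    have h7 : Filter.Tendsto (fun mu => m (r lam) (r mu)) (𝓝 lam) (𝓝 (m (r lam) (r lam))) :=
      ((hMl (r lam)).tendsto (r lam)).comp (hcont lam)
    exact h7.mono_left nhdsWithin_le_nhds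
  have hdiffble : Differentiable ℂ r := fun lam => (hderiv lam).differentiableAt
  -- decay at infinity
  have hdecay : ∀ lam : ℂ, ‖x‖ < ‖lam‖ → ‖r lam‖ ≤ ‖u‖ / (‖lam‖ - ‖x‖) := by
    intro lam hlam
    have e : m (x - lam • u) (r lam) = m x (r lam) - lam • r lam := by
      rw [map_sub, map_smul, LinearMap.sub_apply, LinearMap.smul_apply, hul]
    have h2 : m x (r lam) - lam • r lam = u := by rw [← e]; exact hr lam
    have h1 : lam • r lam = m x (r lam) - u := by
      linear_combination (norm := module) -h2
    have h3 : ‖lam‖ * ‖r lam‖ ≤ ‖x‖ * ‖r lam‖ + ‖u‖ := by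
      calc ‖lam‖ * ‖r lam‖ = ‖lam • r lam‖ := (norm_smul _ _).symm
      _ = ‖m x (r lam) - u‖ := by rw [h1]
      _ ≤ ‖m x (r lam)‖ + ‖u‖ := norm_sub_le _ _
      _ ≤ ‖x‖ * ‖r lam‖ + ‖u‖ := by have := hnorm x (r lam); linarith
    rw [le_div_iff₀ (by linarith)]
    nlinarith
  -- global bound
  have hcontr : Continuous r := hdiffble.continuous
  obtain ⟨C1, hC1⟩ := (isCompact_closedBall (0:ℂ) (‖x‖ + 1)).exists_bound_of_continuousOn
    hcontr.continuousOn
  have hbdd : ∀ lam : ℂ, ‖r lam‖ ≤ max C1 ‖u‖ := by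
    intro lam
    by_cases hl : ‖lam‖ ≤ ‖x‖ + 1
    · refine le_trans (hC1 lam ?_) (le_max_left _ _)
      simpa [Metric.mem_closedBall, dist_eq_norm] using hl
    · push_neg at hl
      have h4 := hdecay lam (by linarith)
      have h5 : ‖u‖ / (‖lam‖ - ‖x‖) ≤ ‖u‖ := by
        apply div_le_self (norm_nonneg _) (by linarith)
      exact le_trans h4 (le_trans h5 (le_max_right _ _))
  have hrange : Bornology.IsBounded (Set.range r) :=
    isBounded_iff_forall_norm_le.mpr ⟨max C1 ‖u‖, by
      rintro w ⟨lam, rfl⟩; exact hbdd lam⟩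
  -- Liouville
  have hconst : ∀ lam : ℂ, r 0 = r lam :=
    fun lam => hdiffble.apply_eq_apply_of_bounded hrange 0 lam
  have hr00 : r 0 = 0 := by
    by_contra hr0
    have hpos : (0:ℝ) < ‖r 0‖ := norm_pos_iff.mpr hr0
    set ε : ℝ := ‖r 0‖ / 2 with hεdef
    have hε : (0:ℝ) < ε := by positivity
    set t : ℝ := ‖x‖ + 1 + ‖u‖ / ε with htdef
    have ht0 : (0:ℝ) ≤ t := by positivity
    have htnorm : ‖(t:ℂ)‖ = t := by
      rw [Complex.norm_real]
      exact abs_of_nonneg ht0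
    have hdivpos : (0:ℝ) ≤ ‖u‖ / ε := by positivity
    have htx : ‖x‖ < ‖(t:ℂ)‖ := by rw [htnorm]; rw [htdef]; linarith
    have h5 := hdecay (t:ℂ) htx
    rw [← hconst (t:ℂ)] at h5
    rw [htnorm] at h5
    have e6 : t - ‖x‖ = 1 + ‖u‖ / ε := by rw [htdef]; ring
    rw [e6] at h5
    have harr : ‖u‖ / (1 + ‖u‖ / ε) ≤ ε := by
      rw [div_le_iff₀ (by positivity)]
      have e7 : ε * (1 + ‖u‖ / ε) = ε + ‖u‖ := by field_simp
      rw [e7]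
      linarith
    rw [hεdef] at harr
    linarith [le_trans h5 harr]
  -- final contradiction
  have hcontra := hr 0
  rw [hr00] at hcontra
  simp only [map_zero] at hcontra
  exact hu0 hcontra.symm

end NCJordanAux


theorem noncomm_jordan_normed_complex_left_division_iso_complex
    {A : Type*} [NormedAddCommGroup A] [NormedSpace ℂ A] [Nontrivial A]
    (m : A →ₗ[ℂ] A →ₗ[ℂ] A)
    (hnorm : ∀ x y : A, ‖m x y‖ ≤ ‖x‖ * ‖y‖)
    (hflex : ∀ x y : A, m (m x y) x = m x (m y x))
    (hjordan : ∀ x y : A, m (m (m x x) y) x = m (m x x) (m y x))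
    (hdiv : ∀ a : A, a ≠ 0 → Function.Bijective (fun x => m a x)) :
    ∃ e : A ≃ₗ[ℂ] ℂ, ∀ x y : A, e (m x y) = e x * e y := by
  classical
  obtain ⟨u, hu0, hul, hur⟩ := exists_unit m hflex hjordan hdiv
  have hspan := forall_smul_unit m hnorm hflex hjordan hdiv hu0 hul hur
  have huniq : ∀ (c c' : ℂ), c • u = c' • u → c = c' := by
    intro c c' h
    by_contra hne
    have h0 : (c - c') • u = 0 := by rw [sub_smul, h, sub_self]
    rcases smul_eq_zero.mp h0 with h1 | h2
    · exact hne (sub_eq_zero.mp h1)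
    · exact hu0 h2
  choose coef hcoef using hspan
  have hadd : ∀ x y : A, coef (x + y) = coef x + coef y := by
    intro x y
    apply huniq
    rw [← hcoef (x + y), add_smul, ← hcoef x, ← hcoef y]
  have hsmul : ∀ (c : ℂ) (x : A), coef (c • x) = c * coef x := by
    intro c x
    apply huniq
    rw [← hcoef (c • x), mul_smul, ← hcoef x]
  have hcu : ∀ c : ℂ, coef (c • u) = c := by
    intro c
    apply huniq
    rw [← hcoef (c • u)]
  refine ⟨{ toFun := coef
            map_add' := hadd
            map_smul' := by
              intro c x
              simpa using hsmul c x
            invFun := fun c => c • u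
            left_inv := fun x => (hcoef x).symm
            right_inv := fun c => hcu c }, ?_⟩
  intro x y
  have h1 : m x y = (coef x * coef y) • u := by
    calc m x y = m (coef x • u) (coef y • u) := by rw [← hcoef x, ← hcoef y]
    _ = (coef x * coef y) • u := by
        rw [map_smul, hur, smul_smul, mul_comm]
  show coef (m x y) = coef x * coef y
  rw [h1, hcu]
end

section
/- Let A be a nonzero absolutely valued algebra over ℂ, i.e. a ℂ-algebra equipped with a norm satisfying ‖xy‖ = ‖x‖·‖y‖ for all x, y. If A contains a left linearly invertible element, then A is isomorphic as a ℂ-algebra to ℂ. -/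
/-!
STATEMENT 3: Let `A` be a nonzero absolutely valued algebra over `ℂ`, i.e. a complex
normed space equipped with a bilinear product `m` whose norm is multiplicative:
`‖m x y‖ = ‖x‖ * ‖y‖` for all `x, y`.  If `A` contains a left linearly invertible
element, then `A` is isomorphic as a `ℂ`-algebra to `ℂ`.
-/

open UniformSpace

noncomputable section

/-- Analytic core: in an absolutely valued complex algebra with a left linearly
invertible element `a`, every element is a scalar multiple of `a`. -/
private lemma avk_span {A : Type*} [NormedAddCommGroup A] [NormedSpace ℂ A]
    (m : A →ₗ[ℂ] A →ₗ[ℂ] A)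
    (hnorm : ∀ x y : A, ‖m x y‖ = ‖x‖ * ‖y‖)
    (a : A) (ha : Function.Bijective (fun x => m a x)) (ha0 : a ≠ 0)
    (x : A) : ∃ c : ℂ, x = c • a := by
  have hα : (0:ℝ) < ‖a‖ := norm_pos_iff.mpr ha0
  let ι : A →L[ℂ] Completion A := Completion.toComplL
  have hιd : DenseRange ι := Completion.denseRange_coe
  have hιu : IsUniformInducing ι := Completion.isUniformInducing_coe A
  have hιnorm : ∀ y : A, ‖ι y‖ = ‖y‖ := fun y => Completion.norm_coe y
  -- extend each left multiplication operator to the completion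
  let M : A → (Completion A →L[ℂ] Completion A) := fun z =>
    ContinuousLinearMap.extend
      (ι.comp ((m z).mkContinuous ‖z‖ (fun y => (hnorm z y).le))) ι
  have hMcoe : ∀ (z y : A), M z (ι y) = ι (m z y) := by
    intro z y
    exact ContinuousLinearMap.extend_eq
      (ι.comp ((m z).mkContinuous ‖z‖ (fun y => (hnorm z y).le))) hιd hιu y
  have hMnorm : ∀ (z : A) (v : Completion A), ‖M z v‖ = ‖z‖ * ‖v‖ := by
    intro z v
    refine Completion.induction_on v ?_ ?_
    · exact isClosed_eq ((M z).continuous.norm) (continuous_const.mul continuous_norm)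
    · intro y
      have h1 : ((y : Completion A)) = ι y := rfl
      rw [h1, hMcoe, hιnorm, hιnorm, hnorm]
  have hMlin : ∀ (z w : A) (c : ℂ), M (z - c • w) = M z - c • M w := by
    intro z w c
    refine ContinuousLinearMap.ext_on (s := Set.range ι)
      (hιd.mono Submodule.subset_span) ?_
    rintro _ ⟨y, rfl⟩
    simp only [ContinuousLinearMap.sub_apply, ContinuousLinearMap.smul_apply, hMcoe,
      map_sub, map_smul, LinearMap.sub_apply, LinearMap.smul_apply]
  -- `M a` is bijective on the completion
  have hSanti : AntilipschitzWith (‖a‖₊⁻¹) (M a) :=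
    ContinuousLinearMap.antilipschitz_of_bound (M a) (fun v =>
      le_of_eq (by rw [hMnorm a v, NNReal.coe_inv, coe_nnnorm,
        inv_mul_cancel_left₀ hα.ne']))
  have hker : LinearMap.ker (M a : Completion A →ₗ[ℂ] Completion A) = ⊥ := LinearMap.ker_eq_bot.mpr hSanti.injective
  have hclosed : IsClosed (Set.range (M a)) :=
    hSanti.isClosed_range (M a).uniformContinuous
  have hsub : Set.range ⇑ι ⊆ Set.range ⇑(M a) := by
    rintro _ ⟨y, rfl⟩
    obtain ⟨z, hz⟩ := ha.2 y
    exact ⟨ι z, by rw [hMcoe]; exact congrArg ι hz⟩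
  have hdense : Dense (Set.range ⇑(M a)) := hιd.mono hsub
  have hrange : LinearMap.range (M a : Completion A →ₗ[ℂ] Completion A) = ⊤ := by
    rw [LinearMap.range_eq_top]
    intro v
    have hv : v ∈ closure (Set.range ⇑(M a)) := hdense v
    rwa [hclosed.closure_eq] at hv
  let E := ContinuousLinearEquiv.ofBijective (M a) hker hrange
  have hE : ⇑E = ⇑(M a) := ContinuousLinearEquiv.coeFn_ofBijective (M a) hker hrange
  let T : Completion A →L[ℂ] Completion A := (E.symm : Completion A →L[ℂ] Completion A).comp (M x)
  by_contra hcon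
  push_neg at hcon
  have hd : ∀ l : ℂ, (0:ℝ) < ‖x - l • a‖ :=
    fun l => norm_pos_iff.mpr (sub_ne_zero.mpr (hcon l))
  have hEs : ∀ w : Completion A, ‖a‖ * ‖E.symm w‖ = ‖w‖ := by
    intro w
    calc ‖a‖ * ‖E.symm w‖ = ‖M a (E.symm w)‖ := (hMnorm a _).symm
    _ = ‖E (E.symm w)‖ := by rw [hE]
    _ = ‖w‖ := by rw [E.apply_symm_apply]
  have hTnorm : ∀ (l : ℂ) (v : Completion A),
      ‖a‖ * ‖(algebraMap ℂ (Completion A →L[ℂ] Completion A) l - T) v‖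
        = ‖x - l • a‖ * ‖v‖ := by
    intro l v
    have h4 : E.symm (M a v) = v := by
      have h4' : M a v = E v := by rw [hE]
      rw [h4', E.symm_apply_apply]
    have h2 : (algebraMap ℂ (Completion A →L[ℂ] Completion A) l - T) v
        = E.symm (-(M (x - l • a) v)) := by
      rw [Algebra.algebraMap_eq_smul_one]
      calc (l • (1 : Completion A →L[ℂ] Completion A) - T) v
          = l • v - E.symm (M x v) := by
            simp [T, ContinuousLinearMap.sub_apply, ContinuousLinearMap.smul_apply]
        _ = E.symm (l • M a v) - E.symm (M x v) := by rw [map_smul, h4]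
        _ = E.symm (l • M a v - M x v) := by rw [← map_sub]
        _ = E.symm (-(M (x - l • a) v)) := by
            rw [hMlin x a l]
            simp only [ContinuousLinearMap.sub_apply, ContinuousLinearMap.smul_apply,
              neg_sub]
    rw [h2, map_neg, norm_neg, hEs, hMnorm]
  have hinvnorm : ∀ (l : ℂ)
      (hu : IsUnit (algebraMap ℂ (Completion A →L[ℂ] Completion A) l - T)),
      ‖((hu.unit⁻¹ : _ˣ) : Completion A →L[ℂ] Completion A)‖ ≤ ‖a‖ / ‖x - l • a‖ := by
    intro l hu
    refine ContinuousLinearMap.opNorm_le_bound _ (by positivity) fun v => ?_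
    have h5 : (algebraMap ℂ (Completion A →L[ℂ] Completion A) l - T)
        (((hu.unit⁻¹ : _ˣ) : Completion A →L[ℂ] Completion A) v) = v := by
      have hmul : (algebraMap ℂ (Completion A →L[ℂ] Completion A) l - T)
          * ((hu.unit⁻¹ : _ˣ) : Completion A →L[ℂ] Completion A) = 1 := by
        have h := hu.unit.mul_inv
        rwa [hu.unit_spec] at h
      calc (algebraMap ℂ (Completion A →L[ℂ] Completion A) l - T)
            (((hu.unit⁻¹ : _ˣ) : Completion A →L[ℂ] Completion A) v)
          = ((algebraMap ℂ (Completion A →L[ℂ] Completion A) l - T)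
              * ((hu.unit⁻¹ : _ˣ) : Completion A →L[ℂ] Completion A)) v := rfl
        _ = v := by rw [hmul]; rfl
    have h6 := hTnorm l (((hu.unit⁻¹ : _ˣ) : Completion A →L[ℂ] Completion A) v)
    rw [h5] at h6
    rw [div_mul_eq_mul_div, le_div_iff₀ (hd l)]
    nlinarith [h6, norm_nonneg v, hα]
  haveI : Nontrivial (Completion A) := by
    refine ⟨⟨ι a, 0, fun h => ?_⟩⟩
    have h0 : ‖ι a‖ = 0 := by rw [h, norm_zero]
    rw [hιnorm] at h0
    exact hα.ne' h0
  have hne : (spectrum ℂ T).Nonempty := spectrum.nonempty T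
  have hopen : IsOpen (spectrum ℂ T) := by
    rw [Metric.isOpen_iff]
    intro l hl
    refine ⟨‖x - l • a‖ / (2 * ‖a‖), div_pos (hd l) (mul_pos two_pos hα), fun μ hμ => ?_⟩
    rw [Metric.mem_ball, dist_eq_norm] at hμ
    by_contra hμs
    have hu : IsUnit (algebraMap ℂ (Completion A →L[ℂ] Completion A) μ - T) :=
      spectrum.notMem_iff.mp hμs
    have hlb : ‖x - l • a‖ - ‖a‖ * ‖μ - l‖ ≤ ‖x - μ • a‖ := by
      have htri : ‖x - l • a‖ ≤ ‖x - μ • a‖ + ‖(μ - l) • a‖ := by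
        have hid : x - l • a = (x - μ • a) + (μ - l) • a := by
          rw [sub_smul]; abel
        rw [hid]
        exact norm_add_le _ _
      rw [norm_smul] at htri
      have : ‖(μ - l : ℂ)‖ = ‖μ - l‖ := rfl
      nlinarith [htri]
    have hkey : ‖μ - l‖ * ‖a‖ < ‖x - μ • a‖ := by
      have hμ' : ‖μ - l‖ * (2 * ‖a‖) < ‖x - l • a‖ :=
        (lt_div_iff₀ (mul_pos two_pos hα)).mp hμ
      nlinarith [hlb, hα]
    have hinv := hinvnorm μ hu
    have hinvpos : (0:ℝ)
        < ‖((hu.unit⁻¹ : _ˣ) : Completion A →L[ℂ] Completion A)‖ := by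
      rw [norm_pos_iff]
      intro h0
      have h1 : ((hu.unit⁻¹ * hu.unit : _ˣ) : Completion A →L[ℂ] Completion A)
          = (0 : Completion A →L[ℂ] Completion A) := by
        rw [Units.val_mul, h0, zero_mul]
      rw [inv_mul_cancel] at h1
      exact one_ne_zero (h1 : (1 : Completion A →L[ℂ] Completion A) = 0)
    have hlt : ‖(algebraMap ℂ (Completion A →L[ℂ] Completion A) l - T) - ↑hu.unit‖
        < ‖((hu.unit⁻¹ : _ˣ) : Completion A →L[ℂ] Completion A)‖⁻¹ := by
      rw [hu.unit_spec]
      have hdiff : (algebraMap ℂ (Completion A →L[ℂ] Completion A) l - T)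
          - (algebraMap ℂ (Completion A →L[ℂ] Completion A) μ - T)
          = algebraMap ℂ (Completion A →L[ℂ] Completion A) (l - μ) := by
        rw [map_sub]; abel
      rw [hdiff, norm_algebraMap']
      have h7 : (‖a‖ / ‖x - μ • a‖)⁻¹
          ≤ ‖((hu.unit⁻¹ : _ˣ) : Completion A →L[ℂ] Completion A)‖⁻¹ :=
        inv_anti₀ hinvpos hinv
      rw [inv_div] at h7
      refine lt_of_lt_of_le ?_ h7
      rw [norm_sub_rev, lt_div_iff₀ hα]
      exact hkey
    exact (spectrum.mem_iff.mp hl) (Units.ofNearby hu.unit _ hlt).isUnit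
  have huniv : spectrum ℂ T = Set.univ :=
    IsClopen.eq_univ ⟨spectrum.isClosed T, hopen⟩ hne
  have hmem : ((‖T‖ + 1 : ℝ) : ℂ) ∈ spectrum ℂ T := by rw [huniv]; trivial
  have hle := spectrum.norm_le_norm_of_mem hmem
  rw [Complex.norm_real, Real.norm_eq_abs, abs_of_pos (by positivity)] at hle
  linarith

theorem absolutely_valued_complex_algebra_with_left_inv_iso_complex
    {A : Type*} [NormedAddCommGroup A] [NormedSpace ℂ A] [Nontrivial A]
    (m : A →ₗ[ℂ] A →ₗ[ℂ] A)
    (hnorm : ∀ x y : A, ‖m x y‖ = ‖x‖ * ‖y‖)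
    (hinv : ∃ a : A, Function.Bijective (fun x => m a x)) :
    ∃ e : A ≃ₗ[ℂ] ℂ, ∀ x y : A, e (m x y) = e x * e y := by
  obtain ⟨a, ha⟩ := hinv
  have ha0 : a ≠ 0 := by
    rintro rfl
    obtain ⟨z, hz⟩ := exists_ne (0 : A)
    exact hz (ha.injective (a₁ := z) (a₂ := 0) (by simp))
  have hα : (0:ℝ) < ‖a‖ := norm_pos_iff.mpr ha0
  have key : ∀ x : A, ∃ c : ℂ, x = c • a := avk_span m hnorm a ha ha0
  -- the span map `c ↦ c • a` is a linear equivalence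
  have hg : Function.Bijective (LinearMap.toSpanSingleton ℂ A a) := by
    constructor
    · intro c c' h
      have h' : (c - c') • a = 0 := by
        rw [sub_smul, sub_eq_zero]
        exact h
      rcases smul_eq_zero.mp h' with h'' | h''
      · exact sub_eq_zero.mp h''
      · exact absurd h'' ha0
    · intro y
      obtain ⟨c, hc⟩ := key y
      exact ⟨c, hc.symm⟩
  let E := LinearEquiv.ofBijective (LinearMap.toSpanSingleton ℂ A a) hg
  have hEapp : ∀ c : ℂ, E c = c • a := fun c => rfl
  have hEsymm : ∀ c : ℂ, E.symm (c • a) = c := by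
    intro c
    rw [← hEapp c, E.symm_apply_apply]
  obtain ⟨μ, hμ⟩ := key (m a a)
  have hμ0 : μ ≠ 0 := by
    intro h
    rw [h, zero_smul] at hμ
    have := hnorm a a
    rw [hμ, norm_zero] at this
    nlinarith
  -- build the equivalence `e = μ • E.symm`
  let eL : A →ₗ[ℂ] ℂ := μ • (E.symm : A →ₗ[ℂ] ℂ)
  have heL : ∀ z : A, eL z = μ * E.symm z := fun z => rfl
  have heLbij : Function.Bijective eL := by
    have h1 : ⇑eL = (fun t : ℂ => μ * t) ∘ ⇑E.symm := by
      funext z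
      simp [heL]
    rw [h1]
    exact (Equiv.mulLeft₀ μ hμ0).bijective.comp E.symm.bijective
  refine ⟨LinearEquiv.ofBijective eL heLbij, ?_⟩
  intro x y
  obtain ⟨s, hs⟩ := key x
  obtain ⟨t, ht⟩ := key y
  have hm : m x y = (s * t * μ) • a := by
    rw [hs, ht]
    simp only [map_smul, LinearMap.smul_apply, hμ, smul_smul, mul_assoc]
    ring_nf
  have happ : ∀ z : A, (LinearEquiv.ofBijective eL heLbij) z = eL z := fun z => rfl
  rw [happ, happ, happ, hm, hs, ht, heL, heL, heL, hEsymm, hEsymm, hEsymm]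
  ring
end
end

section
/- Let K be a field of characteristic zero and let A be a noncommutative Jordan algebra over K without zero divisors (xy = 0 implies x = 0 or y = 0) containing a left linearly invertible element. Then A has a two-sided identity element. -/
/-!
STATEMENT 5: Let `K` be a field of characteristic zero and let `A` be a noncommutative
Jordan algebra over `K` without zero divisors containing a left linearly invertible
element.  Then `A` has a two-sided identity element.
-/

theorem noncomm_jordan_no_zero_divisors_with_left_inv_is_unital
    {K A : Type*} [Field K] [CharZero K]
    [NonUnitalNonAssocRing A] [Module K A] [SMulCommClass K A A] [IsScalarTower K A A]
    (hflex : ∀ x y : A, (x * y) * x = x * (y * x))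
    (hjordan : ∀ x y : A, ((x * x) * y) * x = (x * x) * (y * x))
    (hnzd : ∀ x y : A, x * y = 0 → x = 0 ∨ y = 0)
    (hinv : ∃ a : A, Function.Bijective (fun x : A => a * x)) :
    ∃ e : A, (∀ x : A, e * x = x) ∧ (∀ x : A, x * e = x) := by
  obtain ⟨a, hbij⟩ := hinv
  by_cases ha : a = 0
  · refine ⟨0, fun x => ?_, fun x => ?_⟩
    · obtain ⟨y, hy⟩ := hbij.2 x
      have hx : a * y = x := hy
      rw [ha, zero_mul] at hx
      rw [← hx, mul_zero]
    · obtain ⟨y, hy⟩ := hbij.2 x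
      have hx : a * y = x := hy
      rw [ha, zero_mul] at hx
      rw [← hx, zero_mul]
  · -- torsion-free helper
    have tf : ∀ x : A, x + x = 0 → x = 0 := by
      intro x hx
      have h2 : (2 : K) • x = 0 := by rw [two_smul]; exact hx
      have h3 : ((2:K)⁻¹ * 2) • x = 0 := by rw [mul_smul, h2, smul_zero]
      rwa [inv_mul_cancel₀ (by norm_num : (2:K) ≠ 0), one_smul] at h3
    -- linearized flexibility
    have hF : ∀ x y z : A, (x*y)*z + (z*y)*x = x*(y*z) + z*(y*x) := by
      intro x y z
      have h1 := hflex (x + z) y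
      simp only [add_mul, mul_add] at h1
      linear_combination (norm := abel) h1 - hflex x y - hflex z y
    -- linearized Jordan identity
    have hJ1 : ∀ x z y : A,
        ((x*z + z*x)*y)*x + ((x*x)*y)*z = (x*z + z*x)*(y*x) + (x*x)*(y*z) := by
      intro x z y
      have h1 := hjordan (x + z) y
      have h2 := hjordan (x - z) y
      have hz := hjordan z y
      simp only [add_mul, mul_add, sub_mul, mul_sub] at h1 h2
      have key : (((x*z + z*x)*y)*x + ((x*x)*y)*z
            - ((x*z + z*x)*(y*x) + (x*x)*(y*z)))
          + (((x*z + z*x)*y)*x + ((x*x)*y)*z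
            - ((x*z + z*x)*(y*x) + (x*x)*(y*z))) = 0 := by
        simp only [add_mul, mul_add]
        linear_combination (norm := abel) h1 - h2 - hz - hz
      exact sub_eq_zero.mp (tf _ key)
    obtain ⟨e, hae'⟩ := hbij.2 a
    have hae : a * e = a := hae'
    have he0 : e ≠ 0 := by
      intro h
      rw [h, mul_zero] at hae
      exact ha hae.symm
    have hea : e * a = a := by
      have h1 := hflex a e
      rw [hae] at h1
      have h2 : a * (e*a - a) = 0 := by rw [mul_sub, ← h1, sub_self]
      exact sub_eq_zero.mp ((hnzd _ _ h2).resolve_left ha)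
    have haa : a * a ≠ 0 := by
      intro h
      rcases hnzd _ _ h with h'|h' <;> exact ha h'
    have haae : (a*a)*e = a*a := by
      have h1 := hjordan a e
      rw [hea] at h1
      have h2 : ((a*a)*e - a*a) * a = 0 := by rw [sub_mul, h1, sub_self]
      exact sub_eq_zero.mp ((hnzd _ _ h2).resolve_right ha)
    have hee : e * e = e := by
      have h1 := hJ1 a e e
      rw [hae, hea, haae, haae] at h1
      simp only [add_mul, hae] at h1
      have h3 : (a*a)*(e*e) = a*a := by linear_combination (norm := abel) -h1
      have h2 : (a*a)*(e*e - e) = 0 := by rw [mul_sub, h3, haae, sub_self]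
      exact sub_eq_zero.mp ((hnzd _ _ h2).resolve_left haa)
    have hflexE : ∀ x : A, (e*x)*e = e*(x*e) := fun x => hflex e x
    have hR3a : ∀ y : A, (a*y)*e = a*(y*e) := by
      intro y
      have hf2 := hF a y e
      have hj := hJ1 e a y
      rw [hea, hae, hee] at hj
      simp only [add_mul] at hj
      linear_combination (norm := abel) hj - hf2
    have hR3b : ∀ y : A, (e*y)*a = e*(y*a) := by
      intro y
      have hf2 := hF a y e
      linear_combination (norm := abel) hf2 - hR3a y
    have h1fact : ∀ w : A, (w*a)*e = w*a + e*(a*w) - a*w := by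
      intro w
      have h := hF e a w
      rw [hea, hae] at h
      linear_combination (norm := abel) h
    have hI : ∀ z : A, e*(e*z) + (e*z)*e = e*z + e*z + z*e - z := by
      intro z
      obtain ⟨w, hw'⟩ := hbij.2 z
      have hw : a * w = z := hw'
      subst hw
      have h4a := hJ1 e w a
      rw [hee, hea, hae] at h4a
      simp only [add_mul] at h4a
      rw [hR3b w] at h4a
      rw [hflexE (w*a)] at h4a
      rw [h1fact (w*e)] at h4a
      rw [h1fact w] at h4a
      rw [← hR3a w] at h4a
      rw [← hflexE (a*w)] at h4a
      rw [mul_sub, mul_add] at h4a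
      linear_combination (norm := abel) h4a
    have hIII : ∀ x : A, a*(e*x) - a*x = (x*e)*a - x*a := by
      intro x
      have h := hF a e x
      rw [hae, hea] at h
      linear_combination (norm := abel) -h
    have hT1 : ∀ z : A, e*(e*z + z*e - z) = e*z + z*e - z := by
      intro z
      rw [mul_sub, mul_add, ← hflexE z]
      linear_combination (norm := abel) hI z
    have hT2 : ∀ z : A, (e*z + z*e - z)*e = e*z + z*e - z := by
      intro z
      have h := hIII (e*z + z*e - z)
      rw [hT1 z, sub_self] at h
      have h2 : ((e*z + z*e - z)*e - (e*z + z*e - z)) * a = 0 := by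
        rw [sub_mul]; exact h.symm
      exact sub_eq_zero.mp ((hnzd _ _ h2).resolve_right ha)
    have halfzero : ∀ q : A, e*q + q*e = q → q = 0 := by
      intro q hq
      have hqe : q*e = q - e*q := by linear_combination (norm := abel) hq
      have hP : q*q = (e*q)*q + q*(e*q) := by
        have h := hflex q e
        rw [hqe, sub_mul] at h
        linear_combination (norm := abel) h
      have hRq : ∀ y : A, ((q*q)*y)*e = (q*q)*(y*e) := by
        intro y
        have h := hJ1 q e y
        have hsum : q*e + e*q = q := by linear_combination (norm := abel) hq
        rw [hsum] at h
        rw [hflex q y] at h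
        exact add_left_cancel h
      have hCq : e*(q*q) = (q*q)*e := by
        have h := hF q q e
        rw [hqe, mul_sub] at h
        linear_combination (norm := abel) -h - hP
      have hc : (q*q)*e = q*q := by
        have h := hT1 (q*q)
        rw [hCq] at h
        rw [mul_sub, mul_add] at h
        rw [hCq] at h
        have hR2 : ((q*q)*e)*e = (q*q)*e := by
          have h' := hRq e
          rwa [hee] at h'
        have hme : e*((q*q)*e) = (q*q)*e := by
          rw [← hflexE (q*q), hCq, hR2]
        rw [hme] at h
        linear_combination (norm := abel) -h
      have hfin := hjordan q e
      rw [hc] at hfin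
      have h0 : (q*q)*(q*e) = 0 := by rw [hqe, mul_sub, hfin, sub_self]
      rcases hnzd _ _ h0 with h|h
      · rcases hnzd _ _ h with h'|h' <;> exact h'
      · rcases hnzd _ _ h with h'|h'
        · exact h'
        · exact absurd h' he0
    have hS : ∀ z : A, e*z + z*e = z + z := by
      intro z
      have hr : e*(e*z + z*e - z - z) + (e*z + z*e - z - z)*e = e*z + z*e - z - z := by
        have e1 : e*(e*z + z*e - z - z) = (e*z + z*e - z) - e*z := by
          rw [show e*z + z*e - z - z = (e*z + z*e - z) - z from by abel, mul_sub, hT1 z]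
        have e2 : (e*z + z*e - z - z)*e = (e*z + z*e - z) - z*e := by
          rw [show e*z + z*e - z - z = (e*z + z*e - z) - z from by abel, sub_mul, hT2 z]
        rw [e1, e2]; abel
      have h0 := halfzero _ hr
      linear_combination (norm := abel) h0
    refine ⟨e, fun z => ?_, fun z => ?_⟩
    · have h2 : e*z + z*e - z = z := by rw [hS z]; abel
      have h1 := hT1 z
      rw [h2] at h1
      exact h1
    · have h2 : e*z + z*e - z = z := by rw [hS z]; abel
      have h1 := hT2 z
      rw [h2] at h1
      exact h1
end

section
/- Let V be a finite-dimensional real vector space of dimension at least 1, (·|·) a negative definite symmetric bilinear form on V, ∧ an anticommutative bilinear product on V, and φ a linear automorphism of V. Define x Δ y = φ*(φ(x) ∧ φ(y)), where φ* is the adjoint of φ with respect to (·|·). Then the algebra (V,(·|·),∧) is flexible and of linear division if and only if the algebra (V,(·|·),Δ) is flexible and of linear division. -/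
/-!
STATEMENT 10: Let `V` be a finite-dimensional real vector space of dimension `≥ 1`,
`B` a negative definite symmetric bilinear form on `V`, `w` an anticommutative bilinear
product on `V`, and `φ` a linear automorphism of `V` with adjoint `φ*` (characterized by
`B (φ* x) y = B x (φ y)`).  Define `x Δ y = φ* (φ x ∧ φ y)`.  Then the quadratic
algebra `(V,B,∧)` (on `ℝ × V`) is flexible and of linear division if and only if
`(V,B,Δ)` is flexible and of linear division.
-/

/-- The quadratic algebra product on `ℝ × V` built from a bilinear form `B` and an
anticommutative product `w` on `V`:
`(α+x)(β+y) = (αβ + B x y) + (α y + β x + w x y)`. -/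
def quadMul {V : Type*} [AddCommGroup V] [Module ℝ V]
    (B : V →ₗ[ℝ] V →ₗ[ℝ] ℝ) (w : V → V → V) (p q : ℝ × V) : ℝ × V :=
  (p.1 * q.1 + B p.2 q.2, p.1 • q.2 + q.1 • p.2 + w p.2 q.2)

namespace QuadIsotopyAux

variable {V : Type*} [AddCommGroup V] [Module ℝ V]

/-- left multiplication as a linear map -/
def quadLmap (B : V →ₗ[ℝ] V →ₗ[ℝ] ℝ) (w : V →ₗ[ℝ] V →ₗ[ℝ] V) (p : ℝ × V) :
    (ℝ × V) →ₗ[ℝ] (ℝ × V) where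
  toFun q := quadMul B (fun x y => w x y) p q
  map_add' q r := by
    simp only [quadMul, Prod.fst_add, Prod.snd_add, map_add, Prod.mk_add_mk, Prod.mk.injEq,
      smul_add, add_smul]
    constructor <;> first | trivial | ring1 | abel | module
  map_smul' c q := by
    simp only [quadMul, Prod.smul_fst, Prod.smul_snd, map_smul, Prod.smul_mk, Prod.mk.injEq,
      smul_eq_mul, RingHom.id_apply, smul_add, smul_smul, mul_comm]
    constructor <;> first | trivial | ring1 | module

/-- right multiplication as a linear map -/
def quadRmap (B : V →ₗ[ℝ] V →ₗ[ℝ] ℝ) (w : V →ₗ[ℝ] V →ₗ[ℝ] V) (p : ℝ × V) :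
    (ℝ × V) →ₗ[ℝ] (ℝ × V) where
  toFun q := quadMul B (fun x y => w x y) q p
  map_add' q r := by
    simp only [quadMul, Prod.fst_add, Prod.snd_add, map_add, LinearMap.add_apply,
      Prod.mk_add_mk, Prod.mk.injEq, smul_add, add_smul]
    constructor <;> first | trivial | ring1 | abel | module
  map_smul' c q := by
    simp only [quadMul, Prod.smul_fst, Prod.smul_snd, map_smul, LinearMap.smul_apply,
      Prod.smul_mk, Prod.mk.injEq, smul_eq_mul, RingHom.id_apply, smul_add, smul_smul, mul_comm]
    constructor <;> first | trivial | ring1 | module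

theorem flex_iff (B : V →ₗ[ℝ] V →ₗ[ℝ] ℝ)
    (hsymm : ∀ x y : V, B x y = B y x)
    (w : V →ₗ[ℝ] V →ₗ[ℝ] V)
    (hanti : ∀ x y : V, w x y = -(w y x)) :
    (∀ p q : ℝ × V,
        quadMul B (fun x y => w x y) (quadMul B (fun x y => w x y) p q) p =
          quadMul B (fun x y => w x y) p (quadMul B (fun x y => w x y) q p)) ↔
    (∀ x y : V, B (w x y) x = 0) := by
  have hxx : ∀ x : V, w x x = 0 := by
    intro x
    have h := hanti x x
    have h2 : (2:ℝ) • w x x = 0 := by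
      rw [two_smul]; nth_rewrite 1 [h]; abel
    rcases smul_eq_zero.mp h2 with h3 | h3
    · norm_num at h3
    · exact h3
  constructor
  · intro h x y
    have h1 := congrArg Prod.fst (h (0, x) (0, y))
    simp only [quadMul, zero_mul, zero_smul, zero_add, add_zero, mul_zero, smul_zero] at h1
    have h2 : B ((w x) y) x = B x ((w y) x) := by linarith
    rw [hanti y x, map_neg] at h2
    nth_rewrite 1 [hsymm] at h2
    rw [hsymm]
    linarith
  · intro hfx p q
    obtain ⟨a, x⟩ := p
    obtain ⟨b, y⟩ := q
    have h2 : B x ((w y) x) = 0 := by rw [hanti y x, map_neg, hsymm]; simp [hfx]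
    have h3 : (w x) x = 0 := hxx x
    have h4 : (w y) x = -((w x) y) := hanti y x
    simp only [quadMul, Prod.mk.injEq, map_add, map_smul, map_neg, smul_eq_mul,
      LinearMap.add_apply, LinearMap.smul_apply, LinearMap.neg_apply, h3, h4,
      smul_add, smul_smul, smul_neg, add_smul]
    constructor
    · have h5 := hfx x y
      have h5' : B x ((w x) y) = 0 := by rw [hsymm]; exact h5
      ring_nf
      linarith [h5, h5', hsymm x y]
    · have h7 : (w x) ((w x) y) = -((w ((w x) y)) x) := hanti x _
      rw [h7, hsymm y x]
      module

/-- kernel analysis helper -/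
theorem kernel_helper (B : V →ₗ[ℝ] V →ₗ[ℝ] ℝ)
    (hsymm : ∀ x y : V, B x y = B y x)
    (hneg : ∀ x : V, x ≠ 0 → B x x < 0)
    (a b : ℝ) (x y u : V) (hax : a ≠ 0 ∨ x ≠ 0)
    (hu1 : B x u = 0) (hu2 : B y u = 0)
    (hu0 : u = 0 → x ≠ 0 → B x y = 0 → y = 0)
    (h1 : a * b + B x y = 0) (h2 : a • y + b • x + u = 0) : b = 0 ∧ y = 0 := by
  have hBy0 : ∀ z : V, B z z = 0 → z = 0 := by
    intro z hz
    by_contra hz0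
    exact absurd hz (ne_of_lt (hneg z hz0))
  have k1 : a * B x y + b * B x x = 0 := by
    have := congrArg (fun v => B x v) h2
    simpa [map_add, map_smul, smul_eq_mul, hu1] using this
  have k2 : a * B y y + b * B x y = 0 := by
    have := congrArg (fun v => B y v) h2
    simpa [map_add, map_smul, smul_eq_mul, hu2, hsymm y x] using this
  by_cases ha : a = 0
  · subst ha
    have hx : x ≠ 0 := hax.resolve_left (by simp)
    have hBxy : B x y = 0 := by linarith
    have hb : b = 0 := by
      have hBxx := hneg x hx
      have : b * B x x = 0 := by linarith
      rcases mul_eq_zero.mp this with h | h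
      · exact h
      · exact absurd h (ne_of_lt hBxx)
    subst hb
    have hu : u = 0 := by
      have := h2; simpa using this
    exact ⟨rfl, hu0 hu hx hBxy⟩
  · have hBxx_le : B x x ≤ 0 := by
      by_cases hx : x = 0
      · simp [hx]
      · exact le_of_lt (hneg x hx)
    have ha2 : 0 < a * a := mul_self_pos.mpr ha
    have hb : b = 0 := by
      have hk : b * (B x x - a * a) = 0 := by linear_combination k1 - a * h1
      rcases mul_eq_zero.mp hk with h | h
      · exact h
      · linarith
    subst hb
    have hBxy : B x y = 0 := by linarith
    have hyy : B y y = 0 := by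
      have hay : a * B y y = 0 := by linarith
      rcases mul_eq_zero.mp hay with h | h
      · exact absurd h ha
      · exact h
    exact ⟨rfl, hBy0 y hyy⟩

theorem wxx_eq_zero (w : V →ₗ[ℝ] V →ₗ[ℝ] V)
    (hanti : ∀ x y : V, w x y = -(w y x)) : ∀ x : V, w x x = 0 := by
  intro x
  have h := hanti x x
  have h2 : (2:ℝ) • w x x = 0 := by
    rw [two_smul]; nth_rewrite 1 [h]; abel
  rcases smul_eq_zero.mp h2 with h3 | h3
  · norm_num at h3
  · exact h3

theorem div_iff (B : V →ₗ[ℝ] V →ₗ[ℝ] ℝ)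
    (hsymm : ∀ x y : V, B x y = B y x)
    (hneg : ∀ x : V, x ≠ 0 → B x x < 0)
    [FiniteDimensional ℝ V]
    (w : V →ₗ[ℝ] V →ₗ[ℝ] V)
    (hanti : ∀ x y : V, w x y = -(w y x))
    (hfx : ∀ x y : V, B (w x y) x = 0) :
    (∀ p : ℝ × V, p ≠ 0 →
        Function.Bijective (fun q => quadMul B (fun x y => w x y) p q) ∧
          Function.Bijective (fun q => quadMul B (fun x y => w x y) q p)) ↔
    (∀ x y : V, x ≠ 0 → w x y = 0 → ∃ c : ℝ, y = c • x) := by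
  have hxx := wxx_eq_zero w hanti
  have hfx2 : ∀ x y : V, B (w x y) y = 0 := by
    intro x y
    have h := hfx (x + y) y
    have hw : w (x + y) y = w x y := by
      rw [map_add, LinearMap.add_apply, hxx, add_zero]
    rw [hw, map_add] at h
    linarith [hfx x y]
  constructor
  · intro hdiv x y hx hw
    have hBxx : B x x ≠ 0 := ne_of_lt (hneg x hx)
    refine ⟨B x y / B x x, ?_⟩
    have hp : ((0:ℝ), x) ≠ (0 : ℝ × V) := by
      simp [Prod.ext_iff, hx]
    have hinj := (hdiv (0, x) hp).1.injective
    have hBxy' : B x (y - (B x y / B x x) • x) = 0 := by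
      rw [map_sub, map_smul, smul_eq_mul]; field_simp; ring
    have hwxy' : w x (y - (B x y / B x x) • x) = 0 := by
      rw [map_sub, map_smul, hw, hxx]; simp
    have heq : (fun q => quadMul B (fun x y => w x y) (0, x) q) (0, y - (B x y / B x x) • x)
        = (fun q => quadMul B (fun x y => w x y) (0, x) q) 0 := by
      simp [quadMul, hBxy', hwxy']
    have h0 := hinj heq
    have h1 : y - (B x y / B x x) • x = 0 := by
      simpa [Prod.ext_iff] using h0
    exact sub_eq_zero.mp h1
  · intro hD
    have hE : ∀ x y : V, x ≠ 0 → w x y = 0 → B x y = 0 → y = 0 := by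
      intro x y hx hw hB
      obtain ⟨c, rfl⟩ := hD x y hx hw
      have hc : c * B x x = 0 := by
        rw [map_smul, smul_eq_mul] at hB; exact hB
      rcases mul_eq_zero.mp hc with h | h
      · simp [h]
      · exact absurd h (ne_of_lt (hneg x hx))
    intro p hp
    obtain ⟨a, x⟩ := p
    have hax : a ≠ 0 ∨ x ≠ 0 := by
      by_contra h
      push_neg at h
      exact hp (by simp [Prod.ext_iff, h.1, h.2])
    constructor
    · have hinj : Function.Injective (quadLmap B w (a, x)) := by
        apply LinearMap.ker_eq_bot.mp
        rw [LinearMap.ker_eq_bot']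
        intro q hq
        obtain ⟨b, y⟩ := q
        simp only [quadLmap, quadMul, LinearMap.coe_mk, AddHom.coe_mk, Prod.mk_eq_zero] at hq
        obtain ⟨h1, h2⟩ := hq
        have hker := kernel_helper B hsymm hneg a b x y (w x y) hax
          (by rw [hsymm]; exact hfx x y) (by rw [hsymm]; exact hfx2 x y)
          (fun hu hx' hB => hE x y hx' hu hB) h1 h2
        simp [Prod.ext_iff, hker.1, hker.2]
      exact ⟨hinj, LinearMap.injective_iff_surjective.mp hinj⟩
    · have hinj : Function.Injective (quadRmap B w (a, x)) := by
        apply LinearMap.ker_eq_bot.mp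
        rw [LinearMap.ker_eq_bot']
        intro q hq
        obtain ⟨b, y⟩ := q
        simp only [quadRmap, quadMul, LinearMap.coe_mk, AddHom.coe_mk, Prod.mk_eq_zero] at hq
        obtain ⟨h1, h2⟩ := hq
        have h1' : a * b + B x y = 0 := by rw [hsymm]; linarith [h1]
        have h2' : a • y + b • x + w y x = 0 := by rw [add_comm (a • y) (b • x)]; exact h2
        have hker := kernel_helper B hsymm hneg a b x y (w y x) hax
          (by rw [hsymm]; exact hfx2 y x) (by rw [hsymm]; exact hfx y x)
          (fun hu hx' hB => hE x y hx' (by rw [hanti x y, hu, neg_zero]) hB) h1' h2'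
        simp [Prod.ext_iff, hker.1, hker.2]
      exact ⟨hinj, LinearMap.injective_iff_surjective.mp hinj⟩

theorem key_iff (B : V →ₗ[ℝ] V →ₗ[ℝ] ℝ)
    (hsymm : ∀ x y : V, B x y = B y x)
    (hneg : ∀ x : V, x ≠ 0 → B x x < 0)
    [FiniteDimensional ℝ V]
    (w : V →ₗ[ℝ] V →ₗ[ℝ] V)
    (hanti : ∀ x y : V, w x y = -(w y x)) :
    ((∀ p q : ℝ × V,
        quadMul B (fun x y => w x y) (quadMul B (fun x y => w x y) p q) p =
          quadMul B (fun x y => w x y) p (quadMul B (fun x y => w x y) q p)) ∧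
      (∀ p : ℝ × V, p ≠ 0 →
        Function.Bijective (fun q => quadMul B (fun x y => w x y) p q) ∧
          Function.Bijective (fun q => quadMul B (fun x y => w x y) q p))) ↔
    ((∀ x y : V, B (w x y) x = 0) ∧
      (∀ x y : V, x ≠ 0 → w x y = 0 → ∃ c : ℝ, y = c • x)) := by
  constructor
  · rintro ⟨hf, hd⟩
    have hfx := (flex_iff B hsymm w hanti).mp hf
    exact ⟨hfx, (div_iff B hsymm hneg w hanti hfx).mp hd⟩
  · rintro ⟨hfx, hD⟩
    exact ⟨(flex_iff B hsymm w hanti).mpr hfx,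
      (div_iff B hsymm hneg w hanti hfx).mpr hD⟩

theorem main_thm
    {V : Type*} [AddCommGroup V] [Module ℝ V] [FiniteDimensional ℝ V]
    (hdim : 1 ≤ Module.finrank ℝ V)
    (B : V →ₗ[ℝ] V →ₗ[ℝ] ℝ)
    (hsymm : ∀ x y : V, B x y = B y x)
    (hneg : ∀ x : V, x ≠ 0 → B x x < 0)
    (w : V →ₗ[ℝ] V →ₗ[ℝ] V)
    (hanti : ∀ x y : V, w x y = -(w y x))
    (φ : V ≃ₗ[ℝ] V) (φs : V →ₗ[ℝ] V)
    (hadj : ∀ x y : V, B (φs x) y = B x (φ y)) :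
    ((∀ p q : ℝ × V,
        quadMul B (fun x y => w x y) (quadMul B (fun x y => w x y) p q) p =
          quadMul B (fun x y => w x y) p (quadMul B (fun x y => w x y) q p)) ∧
      (∀ p : ℝ × V, p ≠ 0 →
        Function.Bijective (fun q => quadMul B (fun x y => w x y) p q) ∧
          Function.Bijective (fun q => quadMul B (fun x y => w x y) q p)))
    ↔
    ((∀ p q : ℝ × V,
        quadMul B (fun x y => φs (w (φ x) (φ y)))
            (quadMul B (fun x y => φs (w (φ x) (φ y))) p q) p =
          quadMul B (fun x y => φs (w (φ x) (φ y))) p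
            (quadMul B (fun x y => φs (w (φ x) (φ y))) q p)) ∧
      (∀ p : ℝ × V, p ≠ 0 →
        Function.Bijective (fun q => quadMul B (fun x y => φs (w (φ x) (φ y))) p q) ∧
          Function.Bijective (fun q => quadMul B (fun x y => φs (w (φ x) (φ y))) q p))) := by
  -- the twisted product as a bilinear map
  set wD : V →ₗ[ℝ] V →ₗ[ℝ] V :=
    LinearMap.mk₂ ℝ (fun x y => φs (w (φ x) (φ y)))
      (fun x x' y => by simp [map_add])
      (fun c x y => by simp [map_smul])
      (fun x y y' => by simp [map_add])
      (fun c x y => by simp [map_smul]) with hwD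
  have hwD_apply : ∀ x y : V, wD x y = φs (w (φ x) (φ y)) := fun x y => rfl
  have hantiD : ∀ x y : V, wD x y = -(wD y x) := by
    intro x y
    rw [hwD_apply, hwD_apply, hanti (φ x) (φ y), map_neg]
  -- injectivity of the adjoint
  have hφs_inj : ∀ z : V, φs z = 0 → z = 0 := by
    intro z hz
    by_contra hz0
    have h1 : B (φs z) (φ.symm z) = 0 := by rw [hz]; simp
    rw [hadj, LinearEquiv.apply_symm_apply] at h1
    exact absurd h1 (ne_of_lt (hneg z hz0))
  -- bridges
  have flexbridge : (∀ x y : V, B (wD x y) x = 0) ↔ (∀ x y : V, B (w x y) x = 0) := by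
    constructor
    · intro h u v
      have := h (φ.symm u) (φ.symm v)
      rw [hwD_apply, hadj, LinearEquiv.apply_symm_apply, LinearEquiv.apply_symm_apply] at this
      exact this
    · intro h x y
      rw [hwD_apply, hadj]
      exact h (φ x) (φ y)
  have divbridge : (∀ x y : V, x ≠ 0 → wD x y = 0 → ∃ c : ℝ, y = c • x) ↔
      (∀ x y : V, x ≠ 0 → w x y = 0 → ∃ c : ℝ, y = c • x) := by
    constructor
    · intro h u v hu hw
      have hx : φ.symm u ≠ 0 := by
        simp only [ne_eq, LinearEquiv.map_eq_zero_iff]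
        exact hu
      have hD : wD (φ.symm u) (φ.symm v) = 0 := by
        rw [hwD_apply, LinearEquiv.apply_symm_apply, LinearEquiv.apply_symm_apply, hw, map_zero]
      obtain ⟨c, hc⟩ := h (φ.symm u) (φ.symm v) hx hD
      refine ⟨c, ?_⟩
      have := congrArg φ hc
      rw [LinearEquiv.apply_symm_apply, map_smul, LinearEquiv.apply_symm_apply] at this
      exact this
    · intro h x y hx hD
      rw [hwD_apply] at hD
      have hw0 : w (φ x) (φ y) = 0 := hφs_inj _ hD
      have hφx : φ x ≠ 0 := by
        simp only [ne_eq, LinearEquiv.map_eq_zero_iff]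
        exact hx
      obtain ⟨c, hc⟩ := h (φ x) (φ y) hφx hw0
      refine ⟨c, ?_⟩
      apply φ.injective
      rw [map_smul, hc]
  have k1 := key_iff B hsymm hneg w hanti
  have k2 := key_iff B hsymm hneg wD hantiD
  exact k1.trans ((and_congr flexbridge.symm divbridge.symm).trans k2.symm)


end QuadIsotopyAux

theorem vector_isotopy_preserves_flexible_linear_division
    {V : Type*} [AddCommGroup V] [Module ℝ V] [FiniteDimensional ℝ V]
    (hdim : 1 ≤ Module.finrank ℝ V)
    (B : V →ₗ[ℝ] V →ₗ[ℝ] ℝ)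
    (hsymm : ∀ x y : V, B x y = B y x)
    (hneg : ∀ x : V, x ≠ 0 → B x x < 0)
    (w : V →ₗ[ℝ] V →ₗ[ℝ] V)
    (hanti : ∀ x y : V, w x y = -(w y x))
    (φ : V ≃ₗ[ℝ] V) (φs : V →ₗ[ℝ] V)
    (hadj : ∀ x y : V, B (φs x) y = B x (φ y)) :
    ((∀ p q : ℝ × V,
        quadMul B (fun x y => w x y) (quadMul B (fun x y => w x y) p q) p =
          quadMul B (fun x y => w x y) p (quadMul B (fun x y => w x y) q p)) ∧
      (∀ p : ℝ × V, p ≠ 0 →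
        Function.Bijective (fun q => quadMul B (fun x y => w x y) p q) ∧
          Function.Bijective (fun q => quadMul B (fun x y => w x y) q p)))
    ↔
    ((∀ p q : ℝ × V,
        quadMul B (fun x y => φs (w (φ x) (φ y)))
            (quadMul B (fun x y => φs (w (φ x) (φ y))) p q) p =
          quadMul B (fun x y => φs (w (φ x) (φ y))) p
            (quadMul B (fun x y => φs (w (φ x) (φ y))) q p)) ∧
      (∀ p : ℝ × V, p ≠ 0 →
        Function.Bijective (fun q => quadMul B (fun x y => φs (w (φ x) (φ y))) p q) ∧
          Function.Bijective (fun q => quadMul B (fun x y => φs (w (φ x) (φ y))) q p))) := by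
  exact QuadIsotopyAux.main_thm hdim B hsymm hneg w hanti φ φs hadj
end

section
/- For real numbers δ and δ', the algebras E_{−1,δ'}(ℍ) and E_{−1,δ}(ℍ) are isomorphic as real algebras if and only if δ' = δ or δ' = −δ. -/
/-!
STATEMENT 18: For real numbers `δ` and `δ'`, the generalized Cayley–Dickson extensions
`E_{−1,δ'}(ℍ)` and `E_{−1,δ}(ℍ)` are isomorphic as real algebras if and only if
`δ' = δ` or `δ' = −δ`.  Here `E_{−1,δ}(ℍ)` is `ℍ × ℍ` with product
`(x,y)(x',y') = (xx' − ȳ'y , y x̄' + y' x + (δ/2)[y',y])`.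
-/

/-- The product of the generalized Cayley–Dickson extension `E_{−1,δ}(ℍ)`. -/
noncomputable def cdMul (δ : ℝ) (p q : Quaternion ℝ × Quaternion ℝ) : Quaternion ℝ × Quaternion ℝ :=
  (p.1 * q.1 - star q.2 * p.2,
    p.2 * star q.1 + q.2 * p.1 + (δ / 2) • (q.2 * p.2 - p.2 * q.2))

namespace CD18

abbrev V := Quaternion ℝ × Quaternion ℝ

/-- the standard inner product on `ℍ × ℍ` in coordinates. -/
noncomputable def ip (p q : V) : ℝ :=
  p.1.re*q.1.re + p.1.imI*q.1.imI + p.1.imJ*q.1.imJ + p.1.imK*q.1.imK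
  + p.2.re*q.2.re + p.2.imI*q.2.imI + p.2.imJ*q.2.imJ + p.2.imK*q.2.imK

/-- the squared norm. -/
noncomputable def Nf (p : V) : ℝ := ip p p

noncomputable def ind (a b : Fin 8) : ℝ := if a = b then 1 else 0

/-- the standard orthonormal basis of `ℍ × ℍ`. -/
noncomputable def B (a : Fin 8) : V :=
  (⟨ind a 0, ind a 1, ind a 2, ind a 3⟩, ⟨ind a 4, ind a 5, ind a 6, ind a 7⟩)

lemma B_fst_re (a : Fin 8) : (B a).1.re = ind a 0 := rfl

lemma B_fst_imI (a : Fin 8) : (B a).1.imI = ind a 1 := rfl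

lemma B_fst_imJ (a : Fin 8) : (B a).1.imJ = ind a 2 := rfl

lemma B_fst_imK (a : Fin 8) : (B a).1.imK = ind a 3 := rfl

lemma B_snd_re (a : Fin 8) : (B a).2.re = ind a 4 := rfl

lemma B_snd_imI (a : Fin 8) : (B a).2.imI = ind a 5 := rfl

lemma B_snd_imJ (a : Fin 8) : (B a).2.imJ = ind a 6 := rfl

lemma B_snd_imK (a : Fin 8) : (B a).2.imK = ind a 7 := rfl

/-- the unit of every `cdMul δ`. -/
noncomputable def uu : V := (1, 0)

/- ### bilinearity of `ip` -/

lemma ip_add_left (p p' q : V) : ip (p + p') q = ip p q + ip p' q := by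
  simp [ip]; ring

lemma ip_smul_left (c : ℝ) (p q : V) : ip (c • p) q = c * ip p q := by
  simp [ip, Quaternion.re_smul, smul_eq_mul]; ring

lemma ip_comm (p q : V) : ip p q = ip q p := by simp [ip]; ring

lemma ip_add_right (p q q' : V) : ip p (q + q') = ip p q + ip p q' := by
  rw [ip_comm, ip_add_left, ip_comm q p, ip_comm q' p]

lemma ip_smul_right (c : ℝ) (p q : V) : ip p (c • q) = c * ip p q := by
  rw [ip_comm, ip_smul_left, ip_comm]

lemma ip_sum_left {n : ℕ} (s : Finset (Fin n)) (f : Fin n → V) (q : V) :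
    ip (∑ i ∈ s, f i) q = ∑ i ∈ s, ip (f i) q := by
  induction s using Finset.induction_on with
  | empty => simp [ip, Quaternion.re_zero, Quaternion.imI_zero, Quaternion.imJ_zero, Quaternion.imK_zero]
  | insert _ _ h ih => rw [Finset.sum_insert h, ip_add_left, ih, Finset.sum_insert h]

lemma ip_sum_right {n : ℕ} (s : Finset (Fin n)) (p : V) (f : Fin n → V) :
    ip p (∑ i ∈ s, f i) = ∑ i ∈ s, ip p (f i) := by
  induction s using Finset.induction_on with
  | empty => simp [ip, Quaternion.re_zero, Quaternion.imI_zero, Quaternion.imJ_zero, Quaternion.imK_zero]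
  | insert _ _ h ih => rw [Finset.sum_insert h, ip_add_right, ih, Finset.sum_insert h]

lemma Nf_smul (c : ℝ) (p : V) : Nf (c • p) = c^2 * Nf p := by
  rw [Nf, Nf, ip_smul_left, ip_smul_right]; ring

lemma Nf_polar (p q : V) : Nf (p + q) = Nf p + 2 * ip p q + Nf q := by
  rw [Nf, Nf, Nf, ip_add_left, ip_add_right, ip_add_right, ip_comm q p]; ring

/- ### the basis -/

lemma ip_basis (i j : Fin 8) : ip (B i) (B j) = if i = j then 1 else 0 := by
  fin_cases i <;> fin_cases j <;> simp [B, ip, ind]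

lemma parseval (v w : V) : ∑ a, ip v (B a) * ip w (B a) = ip v w := by
  rw [Fin.sum_univ_eight]
  simp [B, ip, ind]

lemma expand (v : V) : v = ∑ a, ip v (B a) • B a := by
  rw [Fin.sum_univ_eight]
  refine Prod.ext ?_ ?_ <;> ext <;>
    simp [B_fst_re, B_fst_imI, B_fst_imJ, B_fst_imK, B_snd_re, B_snd_imI, B_snd_imJ, B_snd_imK, ip, ind, Quaternion.re_smul, Quaternion.imI_smul, Quaternion.imJ_smul,
      Quaternion.imK_smul, QuaternionAlgebra.smul_mk]

/- ### bilinearity of `cdMul` -/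

lemma cdMul_add_left (δ : ℝ) (p p' q : V) :
    cdMul δ (p + p') q = cdMul δ p q + cdMul δ p' q := by
  simp only [cdMul, Prod.fst_add, Prod.snd_add, add_mul, mul_add, smul_add, smul_sub,
    Prod.ext_iff, Prod.fst_add, Prod.snd_add]
  constructor <;> abel

lemma cdMul_smul_left (δ : ℝ) (c : ℝ) (p q : V) :
    cdMul δ (c • p) q = c • cdMul δ p q := by
  simp only [cdMul, Prod.smul_fst, Prod.smul_snd, smul_sub, smul_add,
    mul_smul_comm, smul_mul_assoc, Prod.ext_iff, Prod.smul_mk, smul_comm c]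

lemma cdMul_add_right (δ : ℝ) (p q q' : V) :
    cdMul δ p (q + q') = cdMul δ p q + cdMul δ p q' := by
  simp only [cdMul, Prod.fst_add, Prod.snd_add, add_mul, mul_add, smul_add, smul_sub, star_add,
    Prod.ext_iff]
  constructor <;> abel

lemma cdMul_smul_right (δ : ℝ) (c : ℝ) (p q : V) :
    cdMul δ p (c • q) = c • cdMul δ p q := by
  simp only [cdMul, Prod.smul_fst, Prod.smul_snd, smul_sub, smul_add, Quaternion.star_smul,
    mul_smul_comm, smul_mul_assoc, Prod.ext_iff, Prod.smul_mk, smul_comm c]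

lemma cdMul_sum_left (δ : ℝ) {n : ℕ} (s : Finset (Fin n)) (f : Fin n → V) (q : V) :
    cdMul δ (∑ i ∈ s, f i) q = ∑ i ∈ s, cdMul δ (f i) q := by
  induction s using Finset.induction_on with
  | empty =>
      simp only [Finset.sum_empty, cdMul, Prod.fst_zero, Prod.snd_zero, zero_mul, mul_zero,
        sub_zero, zero_sub, add_zero, zero_add, smul_zero]
      simp
  | insert _ _ h ih => rw [Finset.sum_insert h, cdMul_add_left, ih, Finset.sum_insert h]

lemma cdMul_sum_right (δ : ℝ) {n : ℕ} (s : Finset (Fin n)) (p : V) (f : Fin n → V) :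
    cdMul δ p (∑ i ∈ s, f i) = ∑ i ∈ s, cdMul δ p (f i) := by
  induction s using Finset.induction_on with
  | empty =>
      simp only [Finset.sum_empty, cdMul, Prod.fst_zero, Prod.snd_zero, zero_mul, mul_zero,
        sub_zero, zero_sub, add_zero, zero_add, smul_zero, star_zero]
      simp
  | insert _ _ h ih => rw [Finset.sum_insert h, cdMul_add_right, ih, Finset.sum_insert h]

/- ### the unit and squares -/

lemma cdMul_one_left (δ : ℝ) (p : V) : cdMul δ uu p = p := by
  simp [cdMul, uu]

lemma cdMul_one_right (δ : ℝ) (p : V) : cdMul δ p uu = p := by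
  simp [cdMul, uu]

lemma uu_ne_zero : uu ≠ 0 := by
  intro h
  have : (uu.1.re : ℝ) = 0 := by rw [h]; simp [Quaternion.re_zero]
  simp [uu, Quaternion.re_one] at this

/-- the square of any element does not depend on `δ`. -/
lemma cdMul_sq (δ : ℝ) (p : V) :
    cdMul δ p p = (2 * p.1.re) • p - Nf p • uu := by
  refine Prod.ext ?_ ?_ <;> ext <;>
    simp [cdMul, uu, Nf, ip, Quaternion.re_one, Quaternion.imI_one, Quaternion.imJ_one, Quaternion.imK_one,
      Quaternion.re_mul, Quaternion.imI_mul, Quaternion.imJ_mul, Quaternion.imK_mul,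
      Quaternion.re_smul, Quaternion.imI_smul, Quaternion.imJ_smul, Quaternion.imK_smul,
      Quaternion.re_star, Quaternion.imI_star, Quaternion.imJ_star, Quaternion.imK_star] <;>
    ring

/- ### the Frobenius-type invariant -/

set_option maxRecDepth 100000 in
set_option maxHeartbeats 1000000 in
lemma Gval (δ : ℝ) : ∑ a, ∑ b, Nf (cdMul δ (B a) (B b)) = 64 + 6 * δ^2 := by
  simp [Fin.sum_univ_eight, Nf, ip, cdMul, B_fst_re, B_fst_imI, B_fst_imJ, B_fst_imK, B_snd_re, B_snd_imI, B_snd_imJ, B_snd_imK, ind,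
    Quaternion.re_mul, Quaternion.imI_mul, Quaternion.imJ_mul, Quaternion.imK_mul,
    Quaternion.re_sub, Quaternion.imI_sub, Quaternion.imJ_sub, Quaternion.imK_sub,
    Quaternion.re_add, Quaternion.imI_add, Quaternion.imJ_add, Quaternion.imK_add,
    Quaternion.re_smul, Quaternion.imI_smul, Quaternion.imJ_smul, Quaternion.imK_smul,
    Quaternion.re_star, Quaternion.imI_star, Quaternion.imJ_star, Quaternion.imK_star]
  ring

/-- orthogonal contraction lemma -/
lemma contract (C : Matrix (Fin 8) (Fin 8) ℝ)
    (hC : ∀ a b, (∑ i, C i a * C i b) = if a = b then (1:ℝ) else 0)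
    (v : Fin 8 → V) :
    ∑ i, Nf (∑ a, C i a • v a) = ∑ a, Nf (v a) := by
  have step1 : ∀ i, Nf (∑ a, C i a • v a)
      = ∑ a, ∑ b, (C i a * C i b) * ip (v a) (v b) := by
    intro i
    rw [Nf, ip_sum_left]
    refine Finset.sum_congr rfl fun a _ => ?_
    rw [ip_sum_right]
    refine Finset.sum_congr rfl fun b _ => ?_
    rw [ip_smul_left, ip_smul_right]; ring
  calc ∑ i, Nf (∑ a, C i a • v a)
      = ∑ i, ∑ a, ∑ b, (C i a * C i b) * ip (v a) (v b) := by
        exact Finset.sum_congr rfl fun i _ => step1 i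
    _ = ∑ a, ∑ i, ∑ b, (C i a * C i b) * ip (v a) (v b) := Finset.sum_comm
    _ = ∑ a, ∑ b, ∑ i, (C i a * C i b) * ip (v a) (v b) := by
        exact Finset.sum_congr rfl fun a _ => Finset.sum_comm
    _ = ∑ a, ∑ b, (∑ i, C i a * C i b) * ip (v a) (v b) := by
        refine Finset.sum_congr rfl fun a _ => Finset.sum_congr rfl fun b _ => ?_
        rw [Finset.sum_mul]
    _ = ∑ a, Nf (v a) := by
        refine Finset.sum_congr rfl fun a _ => ?_
        simp [hC, ite_mul, Nf]

end CD18

open CD18 in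
theorem cdExtension_iso_iff (δ δ' : ℝ) :
    (∃ e : (Quaternion ℝ × Quaternion ℝ) ≃ₗ[ℝ] (Quaternion ℝ × Quaternion ℝ),
      ∀ p q : Quaternion ℝ × Quaternion ℝ, e (cdMul δ' p q) = cdMul δ (e p) (e q)) ↔
    (δ' = δ ∨ δ' = -δ) := by
  constructor
  · rintro ⟨e, h⟩
    -- the unit is preserved
    have he1 : e uu = uu := by
      have h2 : ∀ q : V, cdMul δ (e uu) q = q := by
        intro q
        have := h uu (e.symm q)
        rw [cdMul_one_left, e.apply_symm_apply] at this
        exact this.symm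
      have := h2 uu
      rwa [cdMul_one_right] at this
    -- norms are preserved
    have hN : ∀ p : V, Nf (e p) = Nf p := by
      intro p
      have hsq := h p p
      rw [cdMul_sq, cdMul_sq, map_sub, map_smul, map_smul, he1] at hsq
      by_cases hc : ∃ c : ℝ, e p = c • uu
      · obtain ⟨c, hcp⟩ := hc
        have hp : p = c • uu := by
          apply e.injective
          rw [hcp, map_smul, he1]
        rw [hcp, hp]
      · -- coefficients must agree
        have key : (2 * p.1.re - 2 * (e p).1.re) • e p = (Nf p - Nf (e p)) • uu := by
          rw [sub_smul, sub_smul]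
          rw [sub_eq_sub_iff_sub_eq_sub]
          exact hsq
        by_cases hA : 2 * p.1.re - 2 * (e p).1.re = 0
        · rw [hA, zero_smul] at key
          have : Nf p - Nf (e p) = 0 := by
            rcases smul_eq_zero.mp key.symm with h0 | h0
            · exact h0
            · exact absurd h0 uu_ne_zero
          linarith
        · exfalso
          apply hc
          refine ⟨(2 * p.1.re - 2 * (e p).1.re)⁻¹ * (Nf p - Nf (e p)), ?_⟩
          rw [mul_smul, ← key, smul_smul, inv_mul_cancel₀ hA, one_smul]
    -- inner products are preserved
    have hip : ∀ p q : V, ip (e p) (e q) = ip p q := by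
      intro p q
      have h1 := Nf_polar (e p) (e q)
      rw [← map_add, hN, hN, hN, Nf_polar p q] at h1
      linarith
    -- the matrix of `e` in the standard basis
    set C : Matrix (Fin 8) (Fin 8) ℝ := fun i a => ip (e (B i)) (B a) with hCdef
    have hrow : C * C.transpose = 1 := by
      ext i j
      rw [Matrix.mul_apply]
      simp only [Matrix.transpose_apply]; simp only [hCdef]
      rw [parseval, hip, ip_basis, Matrix.one_apply]
    have hcol : ∀ a b, (∑ i, C i a * C i b) = if a = b then (1:ℝ) else 0 := by
      have h1 : C.transpose * C = 1 := mul_eq_one_comm.mp hrow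
      intro a b
      have := congrFun (congrFun h1 a) b
      rw [Matrix.mul_apply, Matrix.one_apply] at this
      simpa [Matrix.transpose_apply, mul_comm] using this
    -- expansion of images of basis vectors
    have hexp : ∀ i : Fin 8, e (B i) = ∑ a, C i a • B a := fun i => expand (e (B i))
    -- the invariant computation
    have hinv : ∑ a, ∑ b, Nf (cdMul δ' (B a) (B b))
        = ∑ a, ∑ b, Nf (cdMul δ (B a) (B b)) := by
      calc ∑ a, ∑ b, Nf (cdMul δ' (B a) (B b))
          = ∑ a, ∑ b, Nf (e (cdMul δ' (B a) (B b))) := by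
            exact Finset.sum_congr rfl fun a _ => Finset.sum_congr rfl fun b _ => (hN _).symm
        _ = ∑ a, ∑ b, Nf (cdMul δ (e (B a)) (e (B b))) := by
            exact Finset.sum_congr rfl fun a _ => Finset.sum_congr rfl fun b _ =>
              congrArg Nf (h _ _)
        _ = ∑ b, ∑ a, Nf (cdMul δ (e (B a)) (e (B b))) := Finset.sum_comm
        _ = ∑ b, ∑ c, Nf (cdMul δ (B c) (e (B b))) := by
            refine Finset.sum_congr rfl fun b _ => ?_
            have : ∀ a, cdMul δ (e (B a)) (e (B b)) = ∑ c, C a c • cdMul δ (B c) (e (B b)) := by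
              intro a
              rw [hexp a, cdMul_sum_left]
              exact Finset.sum_congr rfl fun c _ => cdMul_smul_left δ _ _ _
            rw [Finset.sum_congr rfl fun a _ => congrArg Nf (this a)]
            exact contract C hcol _
        _ = ∑ c, ∑ b, Nf (cdMul δ (B c) (e (B b))) := Finset.sum_comm
        _ = ∑ c, ∑ d, Nf (cdMul δ (B c) (B d)) := by
            refine Finset.sum_congr rfl fun c _ => ?_
            have : ∀ b, cdMul δ (B c) (e (B b)) = ∑ d, C b d • cdMul δ (B c) (B d) := by
              intro b
              rw [hexp b, cdMul_sum_right]
              exact Finset.sum_congr rfl fun d _ => cdMul_smul_right δ _ _ _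
            rw [Finset.sum_congr rfl fun b _ => congrArg Nf (this b)]
            exact contract C hcol _
    rw [Gval, Gval] at hinv
    have hsq : δ'^2 = δ^2 := by linarith
    have : (δ' - δ) * (δ' + δ) = 0 := by ring_nf; nlinarith [hsq]
    rcases mul_eq_zero.mp this with h0 | h0
    · left; linarith
    · right; linarith
  · rintro (rfl | rfl)
    · exact ⟨LinearEquiv.refl ℝ _, fun p q => rfl⟩
    · have negSnd_apply : ∀ p : V,
          ((LinearEquiv.refl ℝ (Quaternion ℝ)).prodCongr (LinearEquiv.neg ℝ)) p = (p.1, -p.2) :=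
        fun p => rfl
      refine ⟨(LinearEquiv.refl ℝ (Quaternion ℝ)).prodCongr (LinearEquiv.neg ℝ), fun p q => ?_⟩
      rw [negSnd_apply, negSnd_apply, negSnd_apply]
      refine Prod.ext ?_ ?_ <;>
        simp [cdMul, neg_mul, mul_neg, neg_div, neg_smul, smul_sub] <;>
        abel
end
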